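/- arXiv:2506.14534 — 6 statements merged into one kernel-verified Lean document; each statement's English description precedes it below -/
import Mathlib

section
/- Let G^s be a summary causal graph over a finite set of time series V, and let π be a directed graph on the full-time vertex set V × ℤ. If π is acyclic, every edge of π respects time orientation (i.e., an edge from (A, s) to (B, s') requires s ≤ s'), and the reduction of π (the graph on V with an edge A → B whenever π has an edge from some (A, s) to some (B, s')) is a subgraph of G^s, then there exists a full-time causal graph G^f that is a candidate for G^s (its reduction equals G^s) and that contains π as a subgraph. -/
open Classical Relation

variable {α : Type*}

/-- Full-time vertices: a time series together with an integer time point. -/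
abbrev FullVert (V : Type) := V × ℤ

/-- A full-time causal graph: a DAG on `V × ℤ` whose edges respect time. -/
structure FTCG (V : Type) where
  E : FullVert V → FullVert V → Prop
  time_respecting : ∀ a b, E a b → a.2 ≤ b.2
  acyclic : ∀ v, ¬ Relation.TransGen E v v

/-- Reduction of a graph on `V × ℤ` to a graph on `V`. -/
def reduction {V : Type} (E : FullVert V → FullVert V → Prop) : V → V → Prop :=
  fun A B => ∃ s s', E (A, s) (B, s')

/-- A summary causal graph is a reduction of some FTCG. -/
def IsSCG {V : Type} (Gs : V → V → Prop) : Prop :=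
  ∃ G : FTCG V, reduction G.E = Gs

/-- A candidate FTCG for an SCG. -/
def Candidate {V : Type} (Gs : V → V → Prop) (G : FTCG V) : Prop :=
  reduction G.E = Gs

/-- Consistency through time: every edge is present identically at all time shifts. -/
def ConsistentThroughTime {V : Type} (E : FullVert V → FullVert V → Prop) : Prop :=
  ∀ (A B : V) (s s' d : ℤ), E (A, s) (B, s') → E (A, s + d) (B, s' + d)

/-- A (possibly undirected-traversal) path, as a nonempty duplicate-free list of vertices
consecutively adjacent in one direction or the other. -/
def IsPathList (E : α → α → Prop) (vs : List α) : Prop :=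
  vs ≠ [] ∧ vs.Nodup ∧ vs.Chain' (fun x y => E x y ∨ E y x)

/-- A directed path, as a list of vertices. -/
def IsDirPathList (E : α → α → Prop) (vs : List α) : Prop :=
  vs ≠ [] ∧ vs.Nodup ∧ vs.Chain' E

/-- Vertex at position `i` of the list is a collider on the path. -/
def IsCollider (E : α → α → Prop) (vs : List α) (i : ℕ) : Prop :=
  ∃ a b c, 1 ≤ i ∧ vs[i-1]? = some a ∧ vs[i]? = some b ∧
    vs[i+1]? = some c ∧ E a b ∧ E c b

/-- Descendant relation (reflexive). -/
def Desc (E : α → α → Prop) (a b : α) : Prop := Relation.ReflTransGen E a b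

/-- `Z` blocks a path: some non-collider on it is in `Z`, or some collider on it has no
descendant in `Z`. -/
def BlocksList (E : α → α → Prop) (Z : Set α) (vs : List α) : Prop :=
  (∃ i a, vs[i]? = some a ∧ ¬ IsCollider E vs i ∧ a ∈ Z) ∨
  (∃ i a, vs[i]? = some a ∧ IsCollider E vs i ∧ ∀ d, Desc E a d → d ∉ Z)

/-- A proper path from `X` to `Y`: only its first vertex lies in `X`. -/
def ProperPathFromTo (E : α → α → Prop) (X Y : Set α) (vs : List α) : Prop :=
  IsPathList E vs ∧ (∃ a ∈ X, vs.head? = some a) ∧ (∃ b ∈ Y, vs.getLast? = some b) ∧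
  ∀ i a, vs[i]? = some a → a ∈ X → i = 0

/-- Forbidden set: descendants of vertices `W ∉ X` lying on proper causal paths from `X` to `Y`. -/
def Forb (E : α → α → Prop) (X Y : Set α) : Set α :=
  { d | ∃ w vs, ProperPathFromTo E X Y vs ∧ vs.Chain' E ∧ w ∈ vs ∧ w ∉ X ∧ Desc E w d }

/-- The adjustment criterion in a DAG. -/
def AdjustmentCriterion (E : α → α → Prop) (X Y Z : Set α) : Prop :=
  Z ∩ Forb E X Y = ∅ ∧
  ∀ vs, ProperPathFromTo E X Y vs → ¬ vs.Chain' E → BlocksList E Z vs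

/-- The common adjustment criterion relative to an SCG. -/
def CommonAdjustment {V : Type} (Gs : V → V → Prop) (X Y Z : Set (FullVert V)) : Prop :=
  ∀ G : FTCG V, Candidate Gs G → AdjustmentCriterion G.E X Y Z

/-- The common forbidden set. -/
def CF {V : Type} (Gs : V → V → Prop) (Xf : Set (FullVert V)) (Yt : FullVert V) :
    Set (FullVert V) :=
  { d | ∃ G : FTCG V, Candidate Gs G ∧ d ∈ Forb G.E Xf {Yt} }

/-- The non-conditionable set. -/
def NCset {V : Type} (Gs : V → V → Prop) (Xf : Set (FullVert V)) (Yt : FullVert V) :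
    Set (FullVert V) :=
  CF Gs Xf Yt \ Xf

/-- Extended time: `ℤ` with `+∞` and `-∞`. -/
abbrev ETime := WithBot (WithTop ℤ)

def toETime (n : ℤ) : ETime := ((n : WithTop ℤ) : ETime)

/-- First time at which a time series enters `NC` (`+∞` if never). -/
noncomputable def tNC {V : Type} (Gs : V → V → Prop) (Xf : Set (FullVert V))
    (Yt : FullVert V) (Z : V) : ETime :=
  sInf { s | ∃ n : ℤ, s = toETime n ∧ (Z, n) ∈ NCset Gs Xf Yt }

/-- Directed path (at least one edge) all of whose vertices stay in `S`. -/
def DirPathWithin (E : α → α → Prop) (S : Set α) (a b : α) : Prop :=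
  Relation.TransGen (fun x y => E x y ∧ x ∈ S ∧ y ∈ S) a b

/-- `F` is `Vtv`-NC-accessible. -/
def NCAccessible {V : Type} (Gs : V → V → Prop) (Xf : Set (FullVert V))
    (Yt Vtv F : FullVert V) : Prop :=
  F ≠ Vtv ∧ ∃ G : FTCG V, Candidate Gs G ∧
    DirPathWithin G.E (NCset Gs Xf Yt ∪ {Vtv}) F Vtv

/-- `F` is `Vtv`-NC-accessible via a consistent-through-time candidate. -/
def NCAccessibleC {V : Type} (Gs : V → V → Prop) (Xf : Set (FullVert V))
    (Yt Vtv F : FullVert V) : Prop :=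
  F ≠ Vtv ∧ ∃ G : FTCG V, Candidate Gs G ∧ ConsistentThroughTime G.E ∧
    DirPathWithin G.E (NCset Gs Xf Yt ∪ {Vtv}) F Vtv

/-- Latest time at which the time series `F` is `Vtv`-NC-accessible (`-∞` if never). -/
noncomputable def tAcc {V : Type} (Gs : V → V → Prop) (Xf : Set (FullVert V))
    (Yt Vtv : FullVert V) (F : V) : ETime :=
  sSup { s | ∃ n : ℤ, s = toETime n ∧ NCAccessible Gs Xf Yt Vtv (F, n) }

/-- A directed path from `a` to `b`, as a list. -/
def IsDirPathFromTo (E : α → α → Prop) (a b : α) (vs : List α) : Prop :=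
  IsDirPathList E vs ∧ vs.head? = some a ∧ vs.getLast? = some b

/-- A collider-free backdoor path from `x` to `y`. -/
def IsColliderFreeBackdoor (E : α → α → Prop) (x y : α) (vs : List α) : Prop :=
  IsPathList E vs ∧ vs.head? = some x ∧ vs.getLast? = some y ∧
  (∃ a, vs[1]? = some a ∧ E a x) ∧ ∀ i, ¬ IsCollider E vs i

/-- The consecutive edges of a list path. -/
def listEdge (vs : List α) (a b : α) : Prop :=
  ∃ i, vs[i]? = some a ∧ vs[i+1]? = some b

/-- `b` has `a` as ancestor via a directed path avoiding `A`. -/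
def AncAvoid (E : α → α → Prop) (A : Set α) (a b : α) : Prop :=
  Relation.ReflTransGen (fun x y => E x y ∧ x ∉ A ∧ y ∉ A) a b

/-- Identifiability by common adjustment. -/
def IdentifiableByCommonAdjustment {V : Type} (Gs : V → V → Prop)
    (Xf : Set (FullVert V)) (Yt : FullVert V) : Prop :=
  ∃ Z : Set (FullVert V), Z ⊆ Set.univ \ (Xf ∪ {Yt}) ∧ CommonAdjustment Gs Xf {Yt} Z


/-- any acyclic, time-respecting graph on `V × ℤ` whose reduction is a
subgraph of the SCG `Gs` extends to a candidate FTCG for `Gs`. -/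
theorem stmt0 {V : Type} [Fintype V] (Gs : V → V → Prop) (hGs : IsSCG Gs)
    (π : FullVert V → FullVert V → Prop)
    (hacyc : ∀ v, ¬ Relation.TransGen π v v)
    (htime : ∀ a b, π a b → a.2 ≤ b.2)
    (hsub : ∀ A B, reduction π A B → Gs A B) :
    ∃ G : FTCG V, Candidate Gs G ∧ ∀ a b, π a b → G.E a b := by
  classical
  set E : FullVert V → FullVert V → Prop :=
    fun a b => π a b ∨ (Gs a.1 b.1 ∧ a.2 = 0 ∧ b.2 = 1) with hE
  have htimeE : ∀ a b, E a b → a.2 ≤ b.2 := by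
    rintro a b (h | ⟨_, h0, h1⟩)
    · exact htime a b h
    · omega
  have hπle : ∀ a b, Relation.TransGen π a b → a.2 ≤ b.2 := by
    intro a b h
    induction h with
    | single h => exact htime _ _ h
    | tail _ h ih => exact le_trans ih (htime _ _ h)
  have key : ∀ a b, Relation.TransGen E a b →
      Relation.TransGen π a b ∨ a.2 < b.2 := by
    intro a b h
    induction h with
    | single h =>
      rcases h with h | ⟨_, h0, h1⟩
      · exact Or.inl (Relation.TransGen.single h)
      · right; omega
    | tail hvw h ih =>
      rename_i w u
      rcases h with h | ⟨_, h0, h1⟩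
      · rcases ih with ih | ih
        · exact Or.inl (ih.tail h)
        · exact Or.inr (lt_of_lt_of_le ih (htime _ _ h))
      · right
        rcases ih with ih | ih
        · have := hπle _ _ ih; omega
        · omega
  refine ⟨⟨E, htimeE, ?_⟩, ?_, fun a b h => Or.inl h⟩
  · intro v hv
    rcases key v v hv with h | h
    · exact hacyc v h
    · exact lt_irrefl _ h
  · unfold Candidate reduction
    funext A B
    apply propext
    constructor
    · rintro ⟨s, s', hss⟩
      rcases hss with h | ⟨h, _, _⟩
      · exact hsub A B ⟨s, s', h⟩
      · exact h
    · intro h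
      exact ⟨0, 1, Or.inr ⟨h, rfl, rfl⟩⟩
end

section
/- Let G^s be an SCG, X^f = {X^i_{t−γ_i}} a set of interventions, and Y_t the effect, with Y a descendant in G^s of every intervened time series. Then the total effect is identifiable by common adjustment in G^s if and only if for every intervention X^i_{t−γ_i} and every candidate FTCG G^f, G^f does not contain a collider-free backdoor path from X^i_{t−γ_i} to Y_t all of whose vertices lie in NC ∪ {X^i_{t−γ_i}}. Moreover, when this holds, the set C = (V^f ∖ NC) ∖ X^f satisfies the common adjustment criterion relative to X^f and Y_t. -/
open Classical Relation

variable {α : Type*}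

namespace Stmt3Aux

open Relation List

variable {α : Type*} {β : Type*}

theorem chain'_get? {r : α → α → Prop} {l : List α} (h : List.Chain' r l) :
    ∀ {i : ℕ} {a b : α}, l[i]? = some a → l[i+1]? = some b → r a b := by
  intro i a b ha hb
  rw [List.getElem?_eq_some_iff] at ha hb
  obtain ⟨hi, ha⟩ := ha
  obtain ⟨hi1, hb⟩ := hb
  subst ha hb
  exact List.isChain_iff_getElem.1 h i (by omega)

theorem chain'_of_get? {r : α → α → Prop} {l : List α}
    (h : ∀ i a b, l[i]? = some a → l[i+1]? = some b → r a b) : List.Chain' r l := by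
  unfold List.Chain'; rw [List.isChain_iff_getElem]
  intro i hi
  exact h i _ _ (List.getElem?_eq_getElem (by omega)) (List.getElem?_eq_getElem (by omega))

theorem listEdge_mem_left {l : List α} {a b : α} (h : listEdge l a b) : a ∈ l := by
  obtain ⟨i, ha, _⟩ := h; exact List.mem_of_getElem? ha

theorem listEdge_mem_right {l : List α} {a b : α} (h : listEdge l a b) : b ∈ l := by
  obtain ⟨i, _, hb⟩ := h; exact List.mem_of_getElem? hb

theorem chain'_listEdge {r : α → α → Prop} {l : List α} (hc : List.Chain' r l)
    {a b : α} (h : listEdge l a b) : r a b := by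
  obtain ⟨i, ha, hb⟩ := h; exact chain'_get? hc ha hb

theorem listEdge_append_left {l₁ l₂ : List α} {a b : α} (h : listEdge l₁ a b) :
    listEdge (l₁ ++ l₂) a b := by
  obtain ⟨i, ha, hb⟩ := h
  have hb' : i + 1 < l₁.length := (List.getElem?_eq_some_iff.1 hb).1
  exact ⟨i, by rw [List.getElem?_append_left (by omega)]; exact ha,
    by rw [List.getElem?_append_left hb']; exact hb⟩

theorem listEdge_append_right {l₁ l₂ : List α} {a b : α} (h : listEdge l₂ a b) :
    listEdge (l₁ ++ l₂) a b := by
  obtain ⟨i, ha, hb⟩ := h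
  refine ⟨l₁.length + i, ?_, ?_⟩
  · rw [List.getElem?_append_right (by omega)]; simpa using ha
  · rw [List.getElem?_append_right (by omega)]
    have : l₁.length + i + 1 - l₁.length = i + 1 := by omega
    rw [this]; exact hb

theorem listEdge_concat {l : List α} {x a b : α} (h : listEdge (l ++ [x]) a b) :
    listEdge l a b ∨ (l.getLast? = some a ∧ b = x) := by
  obtain ⟨i, ha, hb⟩ := h
  have hlen : i + 1 < l.length + 1 := by
    have := (List.getElem?_eq_some_iff.1 hb).1; simpa using this
  by_cases hi : i + 1 < l.length
  · left
    refine ⟨i, ?_, ?_⟩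
    · rw [List.getElem?_append_left (by omega)] at ha; exact ha
    · rw [List.getElem?_append_left hi] at hb; exact hb
  · right
    have hieq : i + 1 = l.length := by omega
    have hbx : b = x := by
      rw [hieq, List.getElem?_concat_length] at hb
      exact (Option.some_injective _ hb).symm
    have hil : i < l.length := by omega
    have ha' : l[i]? = some a := by rw [List.getElem?_append_left hil] at ha; exact ha
    refine ⟨?_, hbx⟩
    rw [List.getLast?_eq_getElem?]
    have : l.length - 1 = i := by omega
    rw [this]; exact ha' 


theorem mem_of_getLast?' {l : List α} {a : α} (h : l.getLast? = some a) : a ∈ l := by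
  rw [List.getLast?_eq_getElem?] at h; exact List.mem_of_getElem? h

theorem mem_of_head?' {l : List α} {a : α} (h : l.head? = some a) : a ∈ l :=
  List.mem_of_mem_head? (by rw [h]; rfl)

theorem chain'_rtg_head {r : α → α → Prop} :
    ∀ {l : List α} {h a : α}, List.Chain' r l → l.head? = some h → a ∈ l →
      Relation.ReflTransGen r h a := by
  intro l
  induction l with
  | nil => intro h a _ hh; simp at hh
  | cons x t ih =>
    intro h a hc hh ha
    simp only [List.head?_cons, Option.some.injEq] at hh
    subst hh
    rcases List.mem_cons.1 ha with rfl | hat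
    · exact .refl
    · cases t with
      | nil => simp at hat
      | cons y t' =>
        have hc' := List.isChain_cons_cons.1 hc
        exact Relation.ReflTransGen.head hc'.1 (ih hc'.2 rfl hat)

theorem chain'_tg_head {r : α → α → Prop} {l : List α} {h a : α}
    (hc : List.Chain' r l) (hh : l.head? = some h) (ha : a ∈ l) (hne : a ≠ h) :
    Relation.TransGen r h a := by
  cases l with
  | nil => simp at hh
  | cons x t =>
    simp only [List.head?_cons, Option.some.injEq] at hh
    subst hh
    rcases List.mem_cons.1 ha with rfl | hat
    · exact absurd rfl hne
    · cases t with
      | nil => simp at hat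
      | cons y t' =>
        have hc' := List.isChain_cons_cons.1 hc
        exact Relation.TransGen.head' hc'.1 (chain'_rtg_head hc'.2 rfl hat)

theorem chain'_rtg_last {r : α → α → Prop} :
    ∀ {l : List α} {a z : α}, List.Chain' r l → a ∈ l → l.getLast? = some z →
      Relation.ReflTransGen r a z := by
  intro l
  induction l with
  | nil => simp
  | cons x t ih =>
    intro a z hc ha hz
    rcases List.mem_cons.1 ha with rfl | hat
    · exact chain'_rtg_head hc rfl (mem_of_getLast?' hz)
    · cases t with
      | nil => simp at hat
      | cons y t' =>
        exact ih (List.isChain_cons_cons.1 hc).2 hat (by rwa [List.getLast?_cons_cons] at hz)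

theorem exists_last_split (p : α → Prop) :
    ∀ (l : List α), (∃ a ∈ l, p a) →
      ∃ l₁ z l₂, l = l₁ ++ z :: l₂ ∧ p z ∧ ∀ y ∈ l₂, ¬ p y := by
  intro l
  induction l with
  | nil => simp
  | cons x t ih =>
    intro hex
    by_cases ht : ∃ a ∈ t, p a
    · obtain ⟨l₁, z, l₂, heq, hz, hl₂⟩ := ih ht
      exact ⟨x :: l₁, z, l₂, by rw [heq]; rfl, hz, hl₂⟩
    · push_neg at ht
      obtain ⟨a, ha, hpa⟩ := hex
      rcases List.mem_cons.1 ha with rfl | hat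
      · exact ⟨[], a, t, rfl, hpa, ht⟩
      · exact absurd hpa (ht a hat)

theorem exists_first_split (p : α → Prop) :
    ∀ (l : List α), (∃ a ∈ l, p a) →
      ∃ l₁ z l₂, l = l₁ ++ z :: l₂ ∧ p z ∧ ∀ y ∈ l₁, ¬ p y := by
  intro l
  induction l with
  | nil => simp
  | cons x t ih =>
    intro hex
    by_cases hx : p x
    · exact ⟨[], x, t, rfl, hx, by simp⟩
    · have ht : ∃ a ∈ t, p a := by
        obtain ⟨a, ha, hpa⟩ := hex
        rcases List.mem_cons.1 ha with rfl | hat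
        · exact absurd hpa hx
        · exact ⟨a, hat, hpa⟩
      obtain ⟨l₁, z, l₂, heq, hz, hl₁⟩ := ih ht
      refine ⟨x :: l₁, z, l₂, by rw [heq]; rfl, hz, ?_⟩
      intro y hy
      rcases List.mem_cons.1 hy with rfl | hyl
      · exact hx
      · exact hl₁ y hyl

theorem exists_nodup_chain {r : α → α → Prop} {a b : α} (h : Relation.ReflTransGen r a b) :
    ∃ l : List α, l.Chain' r ∧ l.Nodup ∧ l.head? = some a ∧ l.getLast? = some b := by
  induction h with
  | refl => exact ⟨[a], List.isChain_singleton a, List.nodup_singleton a, rfl, rfl⟩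
  | @tail c b hac hcb ih =>
    obtain ⟨l, hc, hnd, hh, hl⟩ := ih
    by_cases hb : b ∈ l
    · obtain ⟨l₁, l₂, rfl⟩ := List.append_of_mem hb
      refine ⟨l₁ ++ [b], hc.prefix ⟨l₂, by simp⟩, ?_, ?_, by simp [List.getLast?_append]⟩
      · exact (List.IsPrefix.sublist ⟨l₂, by simp⟩).nodup hnd
      · cases l₁ with
        | nil => simpa using hh
        | cons u t => simpa using hh
    · have hlne : l ≠ [] := by rintro rfl; simp at hh
      refine ⟨l ++ [b], ?_, ?_, ?_, by simp [List.getLast?_append]⟩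
      · unfold List.Chain'; rw [List.isChain_append]
        refine ⟨hc, List.isChain_singleton b, ?_⟩
        intro x hx y hy
        simp only [List.head?_cons, Option.mem_def, Option.some.injEq] at hy
        subst hy
        rw [hl] at hx
        simp only [Option.mem_def, Option.some.injEq] at hx
        subst hx
        exact hcb
      · rw [List.nodup_append']
        refine ⟨hnd, List.nodup_singleton b, ?_⟩
        intro x hx hxb
        simp only [List.mem_singleton] at hxb
        subst hxb
        exact hb hx
      · rw [List.head?_append, hh]; rfl


theorem getLast?_append' {l₁ l₂ : List α} (h : l₂ ≠ []) :
    (l₁ ++ l₂).getLast? = l₂.getLast? := by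
  rw [List.getLast?_append]
  cases h2 : l₂.getLast? with
  | none => exact absurd (List.getLast?_eq_none_iff.1 h2) h
  | some u => rfl

/-! ### Graph constructions -/

section Graphs
variable {V : Type}

theorem cand_Gs {Gs : V → V → Prop} {H : FTCG V} (hc : Candidate Gs H)
    {u v : FullVert V} (h : H.E u v) : Gs u.1 v.1 := by
  have : reduction H.E u.1 v.1 := ⟨u.2, v.2, h⟩
  rwa [hc] at this

theorem rtg_time_le {E : FullVert V → FullVert V → Prop}
    (hE : ∀ a b, E a b → a.2 ≤ b.2) {a b : FullVert V}
    (h : Relation.ReflTransGen E a b) : a.2 ≤ b.2 := by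
  induction h with
  | refl => exact le_refl _
  | tail _ h₂ ih => exact le_trans ih (hE _ _ h₂)

theorem tg_time_le {E : FullVert V → FullVert V → Prop}
    (hE : ∀ a b, E a b → a.2 ≤ b.2) {a b : FullVert V}
    (h : Relation.TransGen E a b) : a.2 ≤ b.2 :=
  rtg_time_le hE h.to_reflTransGen

theorem proj_rtg {Gs : V → V → Prop} {H : FTCG V} (hc : Candidate Gs H)
    {a b : FullVert V} (h : Relation.ReflTransGen H.E a b) :
    Relation.ReflTransGen Gs a.1 b.1 := by
  induction h with
  | refl => exact .refl
  | tail _ h₂ ih => exact ih.tail (cand_Gs hc h₂)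

/-- The strict part of a candidate graph on `Gs`. -/
def mkE (Gs : V → V → Prop) (S : FullVert V → FullVert V → Prop) :
    FullVert V → FullVert V → Prop :=
  fun u v => (Gs u.1 v.1 ∧ u.2 < v.2) ∨ S u v

theorem mkE_time {Gs : V → V → Prop} {S : FullVert V → FullVert V → Prop}
    (hS : ∀ u v : FullVert V, S u v → u.2 = v.2) :
    ∀ a b : FullVert V, mkE Gs S a b → a.2 ≤ b.2 := by
  rintro a b (⟨_, h⟩ | h)
  · omega
  · exact le_of_eq (hS a b h)

theorem mkE_acyclic {Gs : V → V → Prop} {S K : FullVert V → FullVert V → Prop}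
    (hS : ∀ u v : FullVert V, S u v → u.2 = v.2)
    (hSK : ∀ u v : FullVert V, S u v → K u v)
    (hK : ∀ u v : FullVert V, K u v → u.2 ≤ v.2)
    (hKa : ∀ v, ¬ Relation.TransGen K v v) :
    ∀ v, ¬ Relation.TransGen (mkE Gs S) v v := by
  have hmono : ∀ a b : FullVert V, Relation.TransGen (mkE Gs S) a b → a.2 ≤ b.2 :=
    fun a b h => tg_time_le (mkE_time hS) h
  have haux : ∀ a b : FullVert V, Relation.TransGen (mkE Gs S) a b → b.2 ≤ a.2 →
      Relation.TransGen K a b := by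
    intro a b h
    induction h with
    | single h1 =>
      intro hba
      rcases h1 with ⟨_, hlt⟩ | hs
      · omega
      · exact .single (hSK _ _ hs)
    | @tail c b h1 h2 ih =>
      intro hba
      have hac : _ ≤ c.2 := hmono _ _ h1
      have hcb : c.2 ≤ b.2 := mkE_time hS _ _ h2
      rcases h2 with ⟨_, hlt⟩ | hs
      · omega
      · exact (ih (by omega)).tail (hSK _ _ hs)
  intro v hv
  exact hKa v (haux v v hv (le_refl _))

/-- Build a candidate FTCG from a same-time edge set `S` certified by an acyclic
time-respecting relation `K`. -/
noncomputable def mkFTCG (Gs : V → V → Prop) (S K : FullVert V → FullVert V → Prop)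
    (hS : ∀ u v : FullVert V, S u v → u.2 = v.2)
    (hSK : ∀ u v : FullVert V, S u v → K u v)
    (hK : ∀ u v : FullVert V, K u v → u.2 ≤ v.2)
    (hKa : ∀ v, ¬ Relation.TransGen K v v) : FTCG V :=
  ⟨mkE Gs S, mkE_time hS, mkE_acyclic hS hSK hK hKa⟩

theorem mkFTCG_E {Gs : V → V → Prop} {S K : FullVert V → FullVert V → Prop}
    {hS hSK hK hKa} : (mkFTCG Gs S K hS hSK hK hKa).E = mkE Gs S := rfl

theorem mkFTCG_candidate {Gs : V → V → Prop} {S K : FullVert V → FullVert V → Prop}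
    (hGsS : ∀ u v : FullVert V, S u v → Gs u.1 v.1)
    {hS hSK hK hKa} : Candidate Gs (mkFTCG Gs S K hS hSK hK hKa) := by
  funext A B
  apply propext
  constructor
  · rintro ⟨s, s', h | h⟩
    · exact h.1
    · exact hGsS _ _ h
  · intro h
    exact ⟨0, 1, Or.inl ⟨h, by norm_num⟩⟩

/-- Adding a single edge `(a,b)` to an acyclic relation stays acyclic when there is
no return path. -/
theorem ext_acyclic {K : FullVert V → FullVert V → Prop}
    (hKa : ∀ v, ¬ Relation.TransGen K v v) {a b : FullVert V}
    (hna : ¬ Relation.ReflTransGen K b a) :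
    ∀ v, ¬ Relation.TransGen (fun u w => K u w ∨ (u = a ∧ w = b)) v v := by
  set E' := fun u w => K u w ∨ (u = a ∧ w = b) with hE'
  have haux : ∀ u v, Relation.TransGen E' u v →
      Relation.TransGen K u v ∨ (Relation.ReflTransGen K u a ∧ Relation.ReflTransGen K b v) := by
    intro u v h
    induction h with
    | single h1 =>
      rcases h1 with hk | ⟨rfl, rfl⟩
      · exact Or.inl (.single hk)
      · exact Or.inr ⟨.refl, .refl⟩
    | @tail c v h1 h2 ih =>
      rcases h2 with hk | ⟨rfl, rfl⟩
      · rcases ih with h | ⟨h1', h2'⟩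
        · exact Or.inl (h.tail hk)
        · exact Or.inr ⟨h1', h2'.tail hk⟩
      · rcases ih with h | ⟨h1', h2'⟩
        · exact Or.inr ⟨h.to_reflTransGen, .refl⟩
        · exact Or.inr ⟨h1', .refl⟩
  intro v hv
  rcases haux v v hv with h | ⟨h1, h2⟩
  · exact hKa v h
  · exact hna (h2.trans h1)

/-- consecutive-pair relation of a duplicate-free list is acyclic -/
theorem listEdge_acyclic {l : List (FullVert V)} (hnd : l.Nodup) :
    ∀ v, ¬ Relation.TransGen (fun a b => listEdge l a b ∧ a.2 = b.2) v v := by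
  classical
  have key : ∀ a b : FullVert V,
      Relation.TransGen (fun a b => listEdge l a b ∧ a.2 = b.2) a b →
      ∀ i j : ℕ, l[i]? = some a → l[j]? = some b → i < j := by
    intro a b h
    induction h with
    | single h1 =>
      intro i j ha hb
      obtain ⟨⟨k, hk1, hk2⟩, _⟩ := h1
      have hkl : k < l.length := (List.getElem?_eq_some_iff.1 hk1).1
      have : i = k := (List.getElem?_inj (by exact (List.getElem?_eq_some_iff.1 ha).1) hnd).1 (by rw [ha, hk1])
      have : j = k + 1 := (List.getElem?_inj (by exact (List.getElem?_eq_some_iff.1 hb).1) hnd).1 (by rw [hb, hk2])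
      omega
    | @tail c b h1 h2 ih =>
      intro i j ha hb
      obtain ⟨⟨k, hk1, hk2⟩, _⟩ := h2
      have h1k : i < k := ih i k ha hk1
      have : j = k + 1 := (List.getElem?_inj ((List.getElem?_eq_some_iff.1 hb).1) hnd).1 (by rw [hb, hk2])
      omega
  intro v hv
  have hvmem : v ∈ l := by
    cases hv with
    | single h => exact listEdge_mem_left h.1
    | tail h1 h2 => exact listEdge_mem_right h2.1
  obtain ⟨i, hi⟩ := List.mem_iff_getElem?.1 hvmem
  exact absurd (key v v hv i i hi hi) (lt_irrefl i)

end Graphs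

/-! ### Realization of summary-level paths as candidate FTCGs -/

section Realize
variable {V : Type}

theorem exists_Gstrict (Gs : V → V → Prop) :
    ∃ H : FTCG V, Candidate Gs H ∧ H.E = mkE Gs (fun _ _ => False) := by
  refine ⟨mkFTCG Gs (fun _ _ => False) (fun _ _ => False)
    (by simp) (by simp) (by simp) ?_, mkFTCG_candidate (by simp), rfl⟩
  intro v hv
  cases hv with
  | single h => exact h
  | tail _ h => exact h

/-- Realize a duplicate-free `Gs`-path as a directed path in some candidate FTCG,
starting at time `τ0` and with all later vertices at time `τ1`. -/
theorem realize (Gs : V → V → Prop) {sl : List V} (hch : sl.Chain' Gs) (hnd : sl.Nodup)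
    {a z : V} (hh : sl.head? = some a) (hl : sl.getLast? = some z) (hlen : 2 ≤ sl.length)
    (τ0 τ1 : ℤ) (hτ : τ0 ≤ τ1) :
    ∃ H : FTCG V, Candidate Gs H ∧ ∃ l : List (FullVert V),
      l.Chain' H.E ∧ l.Nodup ∧ l.head? = some (a, τ0) ∧ l.getLast? = some (z, τ1) := by
  classical
  obtain ⟨tl, rfl⟩ : ∃ tl, sl = a :: tl := by
    cases sl with
    | nil => simp at hh
    | cons x t =>
      simp only [List.head?_cons, Option.some.injEq] at hh
      exact ⟨t, by rw [hh]⟩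
  set l : List (FullVert V) := (a, τ0) :: tl.map (·, τ1) with hldef
  have hmapfst : l.map Prod.fst = a :: tl := by
    simp only [hldef, List.map_cons, List.map_map]
    congr 1
    exact List.map_id _
  have hGsl : l.Chain' (fun u v : FullVert V => Gs u.1 v.1) := by
    unfold List.Chain'; rw [← List.isChain_map (f := Prod.fst), hmapfst]; exact hch
  -- the same-time certified relation
  set S : FullVert V → FullVert V → Prop := fun u v => listEdge l u v ∧ u.2 = v.2 with hSdef
  have hS : ∀ u v : FullVert V, S u v → u.2 = v.2 := fun u v h => h.2
  have hGsS : ∀ u v : FullVert V, S u v → Gs u.1 v.1 := fun u v h =>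
    chain'_listEdge hGsl h.1
  have hndl : l.Nodup := by
    rw [hldef, List.nodup_cons]
    constructor
    · intro hmem
      obtain ⟨y, hy, hye⟩ := List.mem_map.1 hmem
      have : y = a ∧ τ1 = τ0 := by
        constructor
        · exact congrArg Prod.fst hye
        · exact congrArg Prod.snd hye
      obtain ⟨rfl, rfl⟩ := this
      exact (List.nodup_cons.1 hnd).1 hy
    · exact (List.nodup_cons.1 hnd).2.map (fun x y hxy => congrArg Prod.fst hxy)
  refine ⟨mkFTCG Gs S S hS (fun _ _ h => h) (fun u v h => le_of_eq h.2)
      (listEdge_acyclic hndl), mkFTCG_candidate hGsS, l, ?_, hndl, rfl, ?_⟩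
  · -- chain
    apply chain'_of_get?
    intro i u v hu hv
    have hGsuv : Gs u.1 v.1 := chain'_get? hGsl hu hv
    have hedge : listEdge l u v := ⟨i, hu, hv⟩
    have hu2 : u.2 = τ0 ∨ u.2 = τ1 := by
      rcases i with _ | i
      · left; rw [hldef] at hu; simp only [List.getElem?_cons_zero, List.getElem?_cons_succ] at hu
        exact congrArg Prod.snd (Option.some_injective _ hu).symm ▸ rfl
      · right
        rw [hldef] at hu
        simp only [List.getElem?_cons_zero, List.getElem?_cons_succ] at hu
        rw [List.getElem?_map] at hu
        obtain ⟨y, _, hye⟩ := Option.map_eq_some_iff.1 hu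
        exact (congrArg Prod.snd hye).symm
    have hv2 : v.2 = τ1 := by
      rw [hldef] at hv
      simp only [List.getElem?_cons_zero, List.getElem?_cons_succ] at hv
      rw [List.getElem?_map] at hv
      obtain ⟨y, _, hye⟩ := Option.map_eq_some_iff.1 hv
      exact (congrArg Prod.snd hye).symm
    rw [mkFTCG_E]
    rcases lt_or_eq_of_le (show u.2 ≤ v.2 by omega) with hlt | heq
    · exact Or.inl ⟨hGsuv, hlt⟩
    · exact Or.inr ⟨hedge, heq⟩
  · -- getLast
    have htlne : tl ≠ [] := by
      intro h; rw [h] at hlen; simp at hlen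
    have hzl : tl.getLast? = some z := by
      cases tl with
      | nil => exact absurd rfl htlne
      | cons y t => rwa [List.getLast?_cons_cons] at hl
    show ((a, τ0) :: tl.map (·, τ1)).getLast? = some (z, τ1)
    cases tl with
    | nil => exact absurd rfl htlne
    | cons y t =>
      have : ((a, τ0) :: (y :: t).map (·, τ1) : List (FullVert V)).getLast?
          = ((y :: t).map (·, τ1)).getLast? := by
        simp only [List.map_cons]
        rw [List.getLast?_cons_cons]
      rw [this, List.getLast?_map, hzl]
      rfl

end Realize

/-! ### Forbidden set utilities -/

section ForbUtil
variable {V : Type}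

theorem Forb_sub_CF {Gs : V → V → Prop} {G : FTCG V} (hG : Candidate Gs G)
    {Xf : Set (FullVert V)} {Yt : FullVert V} :
    Forb G.E Xf {Yt} ⊆ CF Gs Xf Yt := fun _ hd => ⟨G, hG, hd⟩

theorem mem_NC_of_CF {Gs : V → V → Prop} {Xf : Set (FullVert V)} {Yt d : FullVert V}
    (h : d ∈ CF Gs Xf Yt) (hX : d ∉ Xf) : d ∈ NCset Gs Xf Yt := ⟨h, hX⟩

theorem NC_not_Xf {Gs : V → V → Prop} {Xf : Set (FullVert V)} {Yt v : FullVert V}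
    (h : v ∈ NCset Gs Xf Yt) : v ∉ Xf := h.2

/-- Truncate a causal path from `Xf` to `Yt` at the last `Xf`-vertex to get a
proper causal path. -/
theorem trunc_proper {E : FullVert V → FullVert V → Prop} {Xf : Set (FullVert V)}
    {Yt : FullVert V} {l : List (FullVert V)}
    (hch : l.Chain' E) (hnd : l.Nodup) (hh : ∃ x ∈ Xf, l.head? = some x)
    (hl : l.getLast? = some Yt) :
    ∃ l', ProperPathFromTo E Xf {Yt} l' ∧ l'.Chain' E ∧ Yt ∈ l' := by
  obtain ⟨x, hx, hhx⟩ := hh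
  obtain ⟨l₁, z, l₂, rfl, hz, hl₂⟩ :=
    exists_last_split (· ∈ Xf) l ⟨x, mem_of_head?' hhx, hx⟩
  have hsuf : (z :: l₂) <:+ (l₁ ++ z :: l₂) := ⟨l₁, rfl⟩
  have hch' : (z :: l₂).Chain' E := hch.suffix hsuf
  have hlast : (z :: l₂).getLast? = some Yt := by
    rw [List.getLast?_append] at hl
    cases h2 : (z :: l₂).getLast? with
    | none => simp at h2
    | some w => rw [h2] at hl; simp only [Option.some_or] at hl; exact hl
  refine ⟨z :: l₂, ⟨⟨by simp, hsuf.sublist.nodup hnd, hch'.imp (fun {a b} h => Or.inl h)⟩,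
    ⟨z, hz, rfl⟩, ⟨Yt, rfl, hlast⟩, ?_⟩, hch', mem_of_getLast?' hlast⟩
  intro i a hget haX
  by_contra hi0
  have hi : 1 ≤ i := Nat.one_le_iff_ne_zero.2 hi0
  have : a ∈ l₂ := by
    cases i with
    | zero => omega
    | succ k => exact List.mem_of_getElem? (l := l₂) (by simpa using hget)
  exact hl₂ a this haX

/-- If some candidate contains a (not necessarily proper) causal full path from `Xf`
to `Yt`, then `Yt ∈ NC` (provided `Yt ∉ Xf`). -/
theorem Yt_mem_NC_of_path {Gs : V → V → Prop} {Xf : Set (FullVert V)} {Yt : FullVert V}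
    {H : FTCG V} (hH : Candidate Gs H) {l : List (FullVert V)}
    (hch : l.Chain' H.E) (hnd : l.Nodup) (hh : ∃ x ∈ Xf, l.head? = some x)
    (hl : l.getLast? = some Yt) (hYt : Yt ∉ Xf) : Yt ∈ NCset Gs Xf Yt := by
  obtain ⟨l', hp, hc, hmem⟩ := trunc_proper hch hnd hh hl
  exact mem_NC_of_CF (Forb_sub_CF hH ⟨Yt, l', hp, hc, hmem, hYt, .refl⟩) hYt

/-- If `NC` is nonempty then `Yt ∈ NC` (provided `Yt ∉ Xf`). -/
theorem Yt_mem_NC_of_NC_nonempty {Gs : V → V → Prop} {Xf : Set (FullVert V)}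
    {Yt v : FullVert V} (hv : v ∈ NCset Gs Xf Yt) (hYt : Yt ∉ Xf) :
    Yt ∈ NCset Gs Xf Yt := by
  obtain ⟨⟨G', hG', w, vs, hp, hc, _, _, _⟩, _⟩ := hv
  obtain ⟨b, hb, hbl⟩ := hp.2.2.1
  have hbY : b = Yt := hb
  have hbl' : vs.getLast? = some Yt := by rw [← hbY]; exact hbl
  exact mem_NC_of_CF (Forb_sub_CF hG' ⟨Yt, vs, hp, hc, mem_of_getLast?' hbl', hYt, .refl⟩) hYt

/-- A proper path transfers to any graph in which it is still a chain. -/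
theorem proper_of_chain {E E' : FullVert V → FullVert V → Prop} {Xf Ys : Set (FullVert V)}
    {l : List (FullVert V)} (hp : ProperPathFromTo E Xf Ys l) (hc : l.Chain' E') :
    ProperPathFromTo E' Xf Ys l :=
  ⟨⟨hp.1.1, hp.1.2.1, hc.imp (fun {a b} h => Or.inl h)⟩, hp.2.1, hp.2.2.1, hp.2.2.2⟩

end ForbUtil

/-! ### Backdoor path construction -/

section Backdoor
variable {V : Type} {α : Type*}

/-- A violating collider-free backdoor configuration. -/
def Bad {V : Type} (Gs : V → V → Prop) (Xf : Set (FullVert V)) (Yt : FullVert V) : Prop :=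
  ∃ x0 ∈ Xf, ∃ H : FTCG V, Candidate Gs H ∧ ∃ bd : List (FullVert V),
    IsColliderFreeBackdoor H.E x0 Yt bd ∧ ∀ v ∈ bd, v ∈ NCset Gs Xf Yt ∪ {x0}

theorem no_collider_of_LR {E : α → α → Prop}
    (hirr : ∀ a b, E a b → ¬ E b a)
    {L R : List α} {z : α} (hL : L.Chain' (fun a b => E b a)) (hzL : L.getLast? = some z)
    (hzR : (z :: R).Chain' E) :
    ∀ i, ¬ IsCollider E (L ++ R) i := by
  rintro i ⟨a, b, c, h1i, ha, hb, hc, hab, hcb⟩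
  by_cases hiL : i < L.length
  · have ha' : L[i-1]? = some a := by
      rw [List.getElem?_append_left (by omega)] at ha; exact ha
    have hb' : L[i]? = some b := by
      rw [List.getElem?_append_left hiL] at hb; exact hb
    have hba : E b a := by
      have := chain'_get? hL (i := i-1) ha' (by rw [Nat.sub_add_cancel h1i]; exact hb')
      exact this
    exact hirr _ _ hab hba
  · push_neg at hiL
    have hLne : L ≠ [] := by
      intro h; rw [h] at hzL; simp at hzL
    have hL1 : 1 ≤ L.length := by
      cases L with | nil => exact absurd rfl hLne | cons _ _ => simp
    have hb' : (z :: R)[i - L.length + 1]? = some b := by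
      rw [List.getElem?_append_right hiL] at hb
      have : (z :: R)[i - L.length + 1]? = R[i - L.length]? := rfl
      rw [this]; exact hb
    have hc' : (z :: R)[i - L.length + 1 + 1]? = some c := by
      rw [List.getElem?_append_right (by omega)] at hc
      have : (z :: R)[i - L.length + 2]? = R[i - L.length + 1]? := rfl
      have h2 : i + 1 - L.length = i - L.length + 1 := by omega
      rw [h2] at hc
      rw [show i - L.length + 1 + 1 = i - L.length + 2 from rfl, this]
      exact hc
    exact hirr _ _ (chain'_get? hzR hb' hc') hcb

theorem FTCG_irr {H : FTCG V} : ∀ a b : FullVert V, H.E a b → ¬ H.E b a := by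
  intro a b hab hba
  exact H.acyclic a (Relation.TransGen.head hab (.single hba))

/-- Assemble a collider-free backdoor path from a reversed-arrow prefix `L` and a
directed suffix `R`. -/
theorem build_backdoor {Gs : V → V → Prop} {Xf : Set (FullVert V)} {Yt : FullVert V}
    {Hc : FTCG V} (hcand : Candidate Gs Hc)
    {x0 : FullVert V} (hx0 : x0 ∈ Xf)
    {L R : List (FullVert V)} {z : FullVert V}
    (hL : L.Chain' (fun a b => Hc.E b a)) (hLlast : L.getLast? = some z)
    (hR : (z :: R).Chain' Hc.E)
    (hhead : L.head? = some x0)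
    (hlast : (L ++ R).getLast? = some Yt)
    (hnd : (L ++ R).Nodup)
    (hlen : 2 ≤ L.length)
    (hmem : ∀ v ∈ L ++ R, v ≠ x0 → v ∈ NCset Gs Xf Yt) :
    Bad Gs Xf Yt := by
  refine ⟨x0, hx0, Hc, hcand, L ++ R, ⟨⟨?_, hnd, ?_⟩, ?_, hlast, ?_, ?_⟩, ?_⟩
  · -- nonempty
    intro h
    rw [h] at hlast
    simp at hlast
  · -- undirected chain
    unfold List.Chain'; rw [List.isChain_append]
    refine ⟨hL.imp (fun {a b} h => Or.inr h), (hR.tail).imp (fun {a b} h => Or.inl h), ?_⟩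
    intro u hu y hy
    rw [hLlast] at hu
    simp only [Option.mem_def, Option.some.injEq] at hu
    subst hu
    cases R with
    | nil => simp at hy
    | cons r rs =>
      simp only [List.head?_cons, Option.mem_def, Option.some.injEq] at hy
      subst hy
      exact Or.inl (List.isChain_cons_cons.1 hR).1
  · -- head
    rw [List.head?_append, hhead]; rfl
  · -- second vertex with edge into x0
    have h1L : 1 < L.length := by omega
    obtain ⟨u1, hu1⟩ : ∃ u1, L[1]? = some u1 :=
      ⟨L.get ⟨1, h1L⟩, List.getElem?_eq_getElem h1L⟩
    refine ⟨u1, ?_, ?_⟩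
    · rw [List.getElem?_append_left h1L]; exact hu1
    · have hx0' : L[0]? = some x0 := by rw [← List.head?_eq_getElem?]; exact hhead
      exact chain'_get? hL hx0' hu1
  · -- no colliders
    exact no_collider_of_LR FTCG_irr hL hLlast hR
  · -- membership
    intro v hv
    by_cases hvx : v = x0
    · exact Or.inr hvx
    · exact Or.inl (hmem v hv hvx)

end Backdoor

/-! ### Rebuilding minimal candidates -/

section Rebuild
variable {V : Type}

theorem rebuild (Gs : V → V → Prop) {K : FullVert V → FullVert V → Prop}
    (hK : ∀ u v : FullVert V, K u v → u.2 ≤ v.2)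
    (hKa : ∀ v, ¬ Relation.TransGen K v v)
    (P π : List (FullVert V))
    (hPK : ∀ u v : FullVert V, listEdge P u v → K u v)
    (hπK : ∀ u v : FullVert V, listEdge π u v → K u v)
    (hPGs : ∀ u v : FullVert V, listEdge P u v → Gs u.1 v.1)
    (hπGs : ∀ u v : FullVert V, listEdge π u v → Gs u.1 v.1) :
    ∃ H₂ : FTCG V, Candidate Gs H₂ ∧
      (∀ u v : FullVert V, Gs u.1 v.1 → u.2 < v.2 → H₂.E u v) ∧
      (∀ u v : FullVert V, H₂.E u v → u.2 = v.2 → listEdge P u v ∨ listEdge π u v) ∧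
      P.Chain' H₂.E ∧ π.Chain' H₂.E := by
  set S : FullVert V → FullVert V → Prop :=
    fun u v => (listEdge P u v ∨ listEdge π u v) ∧ u.2 = v.2 with hSdef
  have hS : ∀ u v : FullVert V, S u v → u.2 = v.2 := fun u v h => h.2
  have hSK : ∀ u v : FullVert V, S u v → K u v := by
    rintro u v ⟨h | h, _⟩
    exacts [hPK u v h, hπK u v h]
  have hGsS : ∀ u v : FullVert V, S u v → Gs u.1 v.1 := by
    rintro u v ⟨h | h, _⟩
    exacts [hPGs u v h, hπGs u v h]
  refine ⟨mkFTCG Gs S K hS hSK hK hKa, mkFTCG_candidate hGsS, ?_, ?_, ?_, ?_⟩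
  · intro u v h1 h2; exact Or.inl ⟨h1, h2⟩
  · rintro u v (⟨_, hlt⟩ | hSuv) heq
    · omega
    · exact hSuv.1
  · apply chain'_of_get?
    intro i a b ha hb
    have hedge : listEdge P a b := ⟨i, ha, hb⟩
    have hKab := hPK _ _ hedge
    rcases lt_or_eq_of_le (hK _ _ hKab) with hlt | heqt
    · exact Or.inl ⟨hPGs _ _ hedge, hlt⟩
    · exact Or.inr ⟨Or.inl hedge, heqt⟩
  · apply chain'_of_get?
    intro i a b ha hb
    have hedge : listEdge π a b := ⟨i, ha, hb⟩
    have hKab := hπK _ _ hedge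
    rcases lt_or_eq_of_le (hK _ _ hKab) with hlt | heqt
    · exact Or.inl ⟨hπGs _ _ hedge, hlt⟩
    · exact Or.inr ⟨Or.inr hedge, heqt⟩

theorem chain_into_mk {Gs : V → V → Prop} {H : FTCG V} (hcand : Candidate Gs H)
    {S : FullVert V → FullVert V → Prop} {l : List (FullVert V)}
    (hl : l.Chain' H.E) (hS : ∀ u v : FullVert V, listEdge l u v → u.2 = v.2 → S u v) :
    l.Chain' (mkE Gs S) := by
  apply chain'_of_get?
  intro i a b ha hb
  have hedge : listEdge l a b := ⟨i, ha, hb⟩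
  have hH := chain'_listEdge hl hedge
  rcases lt_or_eq_of_le (H.time_respecting _ _ hH) with hlt | heqt
  · exact Or.inl ⟨cand_Gs hcand hH, hlt⟩
  · exact Or.inr (hS _ _ hedge heqt)

end Rebuild

/-! ### The key backdoor construction: the pending edge returns to the head of `P` -/

section CaseC
variable {V : Type}

theorem caseC (Gs : V → V → Prop) (Xf : Set (FullVert V)) (Yt : FullVert V)
    (H : FTCG V) (P π : List (FullVert V)) (w e x' : FullVert V)
    (hcand : Candidate Gs H)
    (hproper : ProperPathFromTo H.E Xf {Yt} P) (hPchain : P.Chain' H.E)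
    (hwP : w ∈ P) (hwXf : w ∉ Xf)
    (hπnd : π.Nodup) (hπch : π.Chain' H.E) (hπh : π.head? = some w)
    (hπl : π.getLast? = some e)
    (hx'P : x' ∈ P) (hx'Xf : x' ∈ Xf)
    (hGsex : Gs e.1 x'.1) (hte : e.2 = x'.2) :
    Bad Gs Xf Yt := by
  classical
  -- x' is the head of P
  have hPh : P.head? = some x' := by
    obtain ⟨k, hk⟩ := List.mem_iff_getElem?.1 hx'P
    have hk0 : k = 0 := hproper.2.2.2 k x' hk hx'Xf
    rw [List.head?_eq_getElem?]; rw [hk0] at hk; exact hk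
  -- any Xf-vertex on P equals x'
  have hPXf : ∀ v ∈ P, v ∈ Xf → v = x' := by
    intro v hv hvXf
    obtain ⟨k, hk⟩ := List.mem_iff_getElem?.1 hv
    have hk0 : k = 0 := hproper.2.2.2 k v hk hvXf
    rw [hk0, ← List.head?_eq_getElem?, hPh] at hk
    exact (Option.some_injective _ hk).symm
  have hwx' : w ≠ x' := fun h => hwXf (h ▸ hx'Xf)
  -- x' is not on π
  have hx'π : x' ∉ π := by
    intro hmem
    have h1 : Relation.TransGen H.E x' w := chain'_tg_head hPchain hPh hwP hwx'
    have h2 : Relation.ReflTransGen H.E w x' := chain'_rtg_head hπch hπh hmem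
    exact H.acyclic x' (h1.trans_left h2)
  have heπ : e ∈ π := mem_of_getLast?' hπl
  have hex' : e ≠ x' := fun h => hx'π (h ▸ heπ)
  -- CF membership of π-vertices
  have hπCF : ∀ v ∈ π, v ∈ CF Gs Xf Yt := fun v hv =>
    ⟨H, hcand, w, P, hproper, hPchain, hwP, hwXf, chain'_rtg_head hπch hπh hv⟩
  have hPCF : ∀ v ∈ P, v ∉ Xf → v ∈ CF Gs Xf Yt := fun v hv hvXf =>
    ⟨H, hcand, v, P, hproper, hPchain, hv, hvXf, .refl⟩
  -- last π-vertex lying on P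
  obtain ⟨σ₁, z, σ₂, hπeq, hzP, hσ₂P⟩ :=
    exists_last_split (· ∈ P) π ⟨w, mem_of_head?' hπh, hwP⟩
  -- split P at z
  obtain ⟨ρ₁, ρ₂, hPeq⟩ := List.append_of_mem hzP
  set τ : List (FullVert V) := z :: σ₂ with hτdef
  have hτπ : ∀ v ∈ τ, v ∈ π := fun v hv => by rw [hπeq]; exact List.mem_append_right σ₁ hv
  have hτch : τ.Chain' H.E := by
    rw [hπeq] at hπch; exact hπch.suffix ⟨σ₁, rfl⟩
  have hτnd : τ.Nodup := by
    rw [hπeq] at hπnd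
    exact (List.IsSuffix.sublist ⟨σ₁, rfl⟩).nodup hπnd
  have hτl : τ.getLast? = some e := by
    rw [hπeq, List.getLast?_append] at hπl
    cases h2 : τ.getLast? with
    | none => simp [hτdef] at h2
    | some u => rw [hτdef] at h2; rw [h2] at hπl; simpa using hπl
  have hzx' : z ≠ x' := fun h => hx'π (h ▸ hτπ z (by simp [hτdef]))
  have hzXf : z ∉ Xf := fun h => hzx' (hPXf z hzP h)
  -- x' not in z :: ρ₂
  have hρ₁ne : ρ₁ ≠ [] := by
    intro h
    rw [h, List.nil_append] at hPeq
    rw [hPeq] at hPh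
    simp only [List.head?_cons, Option.some.injEq] at hPh
    exact hzx' hPh
  have hPnd : P.Nodup := hproper.1.2.1
  have hx'zρ₂ : x' ∉ z :: ρ₂ := by
    intro hmem
    rw [hPeq] at hPnd hPh
    have hx'ρ₁ : x' ∈ ρ₁ := by
      cases ρ₁ with
      | nil => exact absurd rfl hρ₁ne
      | cons u t =>
        simp only [List.cons_append, List.head?_cons, Option.some.injEq] at hPh
        exact hPh ▸ (List.mem_cons_self (a := u) (l := t))
    exact (List.nodup_append'.1 hPnd).2.2 hx'ρ₁ hmem
  -- the directed tail of P from z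
  have hzρ₂ch : (z :: ρ₂).Chain' H.E := by
    rw [hPeq] at hPchain; exact hPchain.suffix ⟨ρ₁, rfl⟩
  have hzρ₂nd : (z :: ρ₂).Nodup := by
    rw [hPeq] at hPnd
    exact (List.IsSuffix.sublist ⟨ρ₁, rfl⟩).nodup hPnd
  have hρ₂P : ∀ v ∈ ρ₂, v ∈ P := fun v hv => by
    rw [hPeq]; exact List.mem_append_right ρ₁ (List.mem_cons_of_mem z hv)
  have hρ₂Xf : ∀ v ∈ ρ₂, v ∉ Xf := by
    intro v hv hvXf
    have : v = x' := hPXf v (hρ₂P v hv) hvXf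
    exact hx'zρ₂ (this ▸ List.mem_cons_of_mem z hv)
  -- getLast of P is Yt
  have hPl : P.getLast? = some Yt := by
    obtain ⟨b, hb, hbl⟩ := hproper.2.2.1
    have : b = Yt := hb
    rwa [this] at hbl
  have hzρ₂l : (z :: ρ₂).getLast? = some Yt := by
    rw [hPeq, List.getLast?_append] at hPl
    cases h2 : (z :: ρ₂).getLast? with
    | none => simp at h2
    | some u => rw [h2] at hPl; simpa using hPl
  -- disjointness of τ-tail and P
  have hσ₂ρ₂ : ∀ v ∈ σ₂, v ∉ ρ₂ := fun v hv hvρ₂ => hσ₂P v hv (hρ₂P v hvρ₂)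
  -- the minimal candidate hosting the two chains
  set S₁ : FullVert V → FullVert V → Prop :=
    fun u v => (listEdge (z :: ρ₂) u v ∨ listEdge τ u v) ∧ u.2 = v.2 with hS₁def
  obtain ⟨H₁, hc₁, hstrict₁, hsame₁, hch₁P, hch₁τ⟩ := rebuild Gs H.time_respecting H.acyclic
    (z :: ρ₂) τ
    (fun u v h => chain'_listEdge hzρ₂ch h)
    (fun u v h => chain'_listEdge hτch h)
    (fun u v h => cand_Gs hcand (chain'_listEdge hzρ₂ch h))
    (fun u v h => cand_Gs hcand (chain'_listEdge hτch h))
  -- whether σ₂ meets Xf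
  by_cases hσXf : ∃ y ∈ σ₂, y ∈ Xf
  · -- yes: backdoor into the earliest such intervention
    obtain ⟨π₁', v', π₂', hσeq, hv'Xf, hπ₁'Xf⟩ := exists_first_split (· ∈ Xf) σ₂ hσXf
    have hτeq : τ = (z :: π₁') ++ v' :: π₂' := by rw [hτdef, hσeq]; rfl
    -- the edge into v'
    have hch2 := hτeq ▸ hch₁τ
    have hsplit := List.isChain_append.1 hch2
    have hu'1 : (z :: π₁').getLast? ≠ none := by simp
    obtain ⟨u', hu'⟩ : ∃ u', (z :: π₁').getLast? = some u' := by
      cases h : (z :: π₁').getLast? with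
      | none => simp at h
      | some u => exact ⟨u, rfl⟩
    have hEu'v' : H₁.E u' v' := hsplit.2.2 u' (by rw [hu']; rfl) v' rfl
    -- assemble
    refine build_backdoor hc₁ hv'Xf (L := v' :: (z :: π₁').reverse) (R := ρ₂) (z := z)
      ?_ ?_ ?_ rfl ?_ ?_ (by simp) ?_
    · -- flipped chain
      unfold List.Chain'; rw [List.isChain_cons]
      constructor
      · intro y hy
        rw [List.head?_reverse, hu'] at hy
        simp only [Option.mem_def, Option.some.injEq] at hy
        subst hy
        exact hEu'v'
      · rw [List.isChain_reverse]
        exact hch₁τ.prefix (by rw [hτeq]; exact ⟨v' :: π₂', rfl⟩)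
    · -- getLast of L is z
      show ((v' :: (z :: π₁').reverse)).getLast? = some z
      rw [show (v' :: (z :: π₁').reverse) = [v'] ++ (z :: π₁').reverse from rfl,
        getLast?_append' (by simp), List.getLast?_reverse]
      rfl
    · exact hch₁P
    · -- getLast of the whole backdoor is Yt
      cases ρ₂ with
      | nil =>
        have hzYt : z = Yt := by simpa using hzρ₂l
        rw [List.append_nil,
          show (v' :: (z :: π₁').reverse) = [v'] ++ (z :: π₁').reverse from rfl,
          getLast?_append' (by simp), List.getLast?_reverse]
        simp [hzYt]
      | cons r rs =>
        rw [getLast?_append' (by simp)]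
        rwa [List.getLast?_cons_cons] at hzρ₂l
    · -- Nodup
      have hσ₂nd : σ₂.Nodup := by
        rw [hπeq] at hπnd
        exact ((List.nodup_append'.1 hπnd).2.1).of_cons
      have hzσ₂ : z ∉ σ₂ := by
        rw [hπeq] at hπnd
        exact (List.nodup_cons.1 (List.nodup_append'.1 hπnd).2.1).1
      have hv'z : v' ≠ z := by
        intro h; exact hzσ₂ (h ▸ (hσeq ▸ List.mem_append_right π₁' ((List.mem_cons_self (a := v') (l := π₂')))))
      have hv'π₁' : v' ∉ π₁' := by
        rw [hσeq, List.nodup_append'] at hσ₂nd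
        intro h
        exact hσ₂nd.2.2 h ((List.mem_cons_self (a := v') (l := π₂')))
      have hπ₁'σ₂ : ∀ y ∈ π₁', y ∈ σ₂ := fun y hy => hσeq ▸ List.mem_append_left _ hy
      rw [List.nodup_append']
      refine ⟨?_, hzρ₂nd.of_cons, ?_⟩
      · rw [List.nodup_cons, List.mem_reverse, List.nodup_reverse]
        constructor
        · intro h
          rcases List.mem_cons.1 h with h | h
          · exact hv'z h
          · exact hv'π₁' h
        · rw [hτeq] at hτnd
          exact (List.IsPrefix.sublist ⟨v' :: π₂', rfl⟩).nodup hτnd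
      · intro a ha haρ₂
        rcases List.mem_cons.1 ha with rfl | ha
        · exact hσ₂P a (hσeq ▸ List.mem_append_right π₁' ((List.mem_cons_self (a := a) (l := π₂')))) (hρ₂P a haρ₂)
        · rw [List.mem_reverse] at ha
          rcases List.mem_cons.1 ha with rfl | ha
          · exact (List.nodup_cons.1 hzρ₂nd).1 haρ₂
          · exact hσ₂P a (hσeq ▸ List.mem_append_left _ ha) (hρ₂P a haρ₂)
    · -- membership in NC
      intro v hv hvne
      rcases List.mem_append.1 hv with hvL | hvρ₂
      · rcases List.mem_cons.1 hvL with rfl | hvL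
        · exact absurd rfl hvne
        · rw [List.mem_reverse] at hvL
          have hvτ : v ∈ τ := by
            rw [hτeq]; exact List.mem_append_left _ hvL
          have hvXf : v ∉ Xf := by
            rcases List.mem_cons.1 hvL with rfl | hvL
            · exact hzXf
            · exact hπ₁'Xf v hvL
          exact mem_NC_of_CF (hπCF v (hτπ v hvτ)) hvXf
      · exact mem_NC_of_CF (hPCF v (hρ₂P v hvρ₂) (hρ₂Xf v hvρ₂)) (hρ₂Xf v hvρ₂)
  · -- no Xf vertex in σ₂: backdoor into x' itself via the new edge (e, x')
    push_neg at hσXf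
    -- no directed return from x' to e in H₁
    have hnret : ¬ Relation.ReflTransGen H₁.E x' e := by
      intro hr
      rcases hr.cases_head with heq' | ⟨u, hu, hue⟩
      · exact hex' heq'.symm
      · have ht1 : x'.2 ≤ u.2 := H₁.time_respecting _ _ hu
        have ht2 : u.2 ≤ e.2 := rtg_time_le H₁.time_respecting hue
        have hequ : x'.2 = u.2 := by omega
        rcases hsame₁ x' u hu hequ with h | h
        · exact hx'zρ₂ (listEdge_mem_left h)
        · exact hx'π (hτπ _ (listEdge_mem_left h))
    -- the backdoor host graph
    set S₂ : FullVert V → FullVert V → Prop :=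
      fun u v => S₁ u v ∨ (u = e ∧ v = x') with hS₂def
    set K₂ : FullVert V → FullVert V → Prop :=
      fun u v => H₁.E u v ∨ (u = e ∧ v = x') with hK₂def
    have hS₂t : ∀ u v : FullVert V, S₂ u v → u.2 = v.2 := by
      rintro u v (h | ⟨rfl, rfl⟩)
      · exact h.2
      · exact hte
    have hS₂K : ∀ u v : FullVert V, S₂ u v → K₂ u v := by
      rintro u v (h | ⟨rfl, rfl⟩)
      · rcases h.1 with h' | h'
        · exact Or.inl (chain'_listEdge hch₁P h')
        · exact Or.inl (chain'_listEdge hch₁τ h')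
      · exact Or.inr ⟨rfl, rfl⟩
    have hK₂t : ∀ u v : FullVert V, K₂ u v → u.2 ≤ v.2 := by
      rintro u v (h | ⟨rfl, rfl⟩)
      · exact H₁.time_respecting _ _ h
      · omega
    have hK₂a : ∀ v, ¬ Relation.TransGen K₂ v v := ext_acyclic H₁.acyclic hnret
    have hGsS₂ : ∀ u v : FullVert V, S₂ u v → Gs u.1 v.1 := by
      rintro u v (h | ⟨rfl, rfl⟩)
      · rcases h.1 with h' | h'
        · exact cand_Gs hcand (chain'_listEdge hzρ₂ch h')
        · exact cand_Gs hcand (chain'_listEdge hτch h')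
      · exact hGsex
    set Hbd : FTCG V := mkFTCG Gs S₂ K₂ hS₂t hS₂K hK₂t hK₂a with hHbddef
    have hcbd : Candidate Gs Hbd := mkFTCG_candidate hGsS₂
    have hτbd : τ.Chain' Hbd.E :=
      chain_into_mk hcand hτch (fun u v hedge heqt => Or.inl ⟨Or.inr hedge, heqt⟩)
    have hPbd : (z :: ρ₂).Chain' Hbd.E :=
      chain_into_mk hcand hzρ₂ch (fun u v hedge heqt => Or.inl ⟨Or.inl hedge, heqt⟩)
    refine build_backdoor hcbd hx'Xf (L := x' :: τ.reverse) (R := ρ₂) (z := z)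
      ?_ ?_ hPbd rfl ?_ ?_ (by simp [hτdef]) ?_
    · -- flipped chain
      unfold List.Chain'; rw [List.isChain_cons]
      constructor
      · intro y hy
        rw [List.head?_reverse, hτl] at hy
        simp only [Option.mem_def, Option.some.injEq] at hy
        subst hy
        exact Or.inr (Or.inr ⟨rfl, rfl⟩)
      · rw [List.isChain_reverse]
        exact hτbd
    · -- getLast of L is z
      rw [show (x' :: τ.reverse) = [x'] ++ τ.reverse from rfl,
        getLast?_append' (by simp [hτdef]), List.getLast?_reverse]
      rfl
    · -- last vertex is Yt
      cases ρ₂ with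
      | nil =>
        have hzYt : z = Yt := by simpa using hzρ₂l
        rw [List.append_nil,
          show (x' :: τ.reverse) = [x'] ++ τ.reverse from rfl,
          getLast?_append' (by simp [hτdef]), List.getLast?_reverse]
        simp [hτdef, hzYt]
      | cons r rs =>
        rw [getLast?_append' (by simp)]
        rwa [List.getLast?_cons_cons] at hzρ₂l
    · -- Nodup
      rw [List.nodup_append']
      refine ⟨?_, hzρ₂nd.of_cons, ?_⟩
      · rw [List.nodup_cons, List.mem_reverse, List.nodup_reverse]
        exact ⟨fun h => hx'π (hτπ _ h), hτnd⟩
      · intro a ha haρ₂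
        rcases List.mem_cons.1 ha with rfl | ha
        · exact hx'zρ₂ (List.mem_cons_of_mem z haρ₂)
        · rw [List.mem_reverse] at ha
          rcases List.mem_cons.1 ha with rfl | ha
          · exact (List.nodup_cons.1 hzρ₂nd).1 haρ₂
          · exact hσ₂P a ha (hρ₂P a haρ₂)
    · -- membership in NC
      intro v hv hvne
      rcases List.mem_append.1 hv with hvL | hvρ₂
      · rcases List.mem_cons.1 hvL with rfl | hvL
        · exact absurd rfl hvne
        · rw [List.mem_reverse] at hvL
          have hvXf : v ∉ Xf := by
            rcases List.mem_cons.1 hvL with rfl | hvσ₂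
            · exact hzXf
            · exact hσXf v hvσ₂
          exact mem_NC_of_CF (hπCF v (hτπ v hvL)) hvXf
      · exact mem_NC_of_CF (hPCF v (hρ₂P v hvρ₂) (hρ₂Xf v hvρ₂)) (hρ₂Xf v hvρ₂)

end CaseC

/-! ### The main closure induction -/

section MLsec
variable {V : Type}

theorem ML (Gs : V → V → Prop) (Xf : Set (FullVert V)) (Yt : FullVert V) :
    ∀ (ρ : List (FullVert V)) (H : FTCG V) (P π : List (FullVert V)) (w e : FullVert V),
    Candidate Gs H →
    (∀ u v : FullVert V, Gs u.1 v.1 → u.2 < v.2 → H.E u v) →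
    (∀ u v : FullVert V, H.E u v → u.2 = v.2 → listEdge P u v ∨ listEdge π u v) →
    ProperPathFromTo H.E Xf {Yt} P → P.Chain' H.E →
    w ∈ P → w ∉ Xf →
    π.Nodup → π.Chain' H.E → π.head? = some w → π.getLast? = some e →
    ρ.Chain' (fun u v : FullVert V => Gs u.1 v.1 ∧ u.2 ≤ v.2) → ρ.head? = some e →
    ∀ d, ρ.getLast? = some d →
    d ∈ CF Gs Xf Yt ∨ Bad Gs Xf Yt := by
  intro ρ
  induction ρ with
  | nil =>
    intro H P π w e _ _ _ _ _ _ _ _ _ _ _ _ he d hd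
    simp at he
  | cons e₀ ρ' ih =>
    intro H P π w e hcand hstrict hsame hproper hPchain hwP hwXf hπnd hπch hπh hπl hρch hρh d hρl
    have he₀ : e₀ = e := by simpa using hρh
    cases ρ' with
    | nil =>
      have hde : e₀ = d := by simpa using hρl
      have hde' : d = e := by rw [← hde, he₀]
      subst hde'
      exact Or.inl ⟨H, hcand, w, P, hproper, hPchain, hwP, hwXf,
        chain'_rtg_head hπch hπh (mem_of_getLast?' hπl)⟩
    | cons e₁ ρ'' =>
      have hstep : Gs e.1 e₁.1 ∧ e.2 ≤ e₁.2 := he₀ ▸ (List.isChain_cons_cons.1 hρch).1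
      have hρch' : (e₁ :: ρ'').Chain' (fun u v : FullVert V => Gs u.1 v.1 ∧ u.2 ≤ v.2) :=
        (List.isChain_cons_cons.1 hρch).2
      have hρl' : (e₁ :: ρ'').getLast? = some d := by
        rwa [List.getLast?_cons_cons] at hρl
      rcases lt_or_eq_of_le hstep.2 with hlt | heq
      · -- strict time step: extend π inside H
        have hne₁ : e₁ ∉ π := by
          intro hmem
          have := rtg_time_le H.time_respecting (chain'_rtg_last hπch hmem hπl)
          omega
        have hπ₂ch : (π ++ [e₁]).Chain' H.E := by
          unfold List.Chain'; rw [List.isChain_append]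
          refine ⟨hπch, List.isChain_singleton e₁, ?_⟩
          intro u hu y hy
          rw [hπl] at hu
          simp only [Option.mem_def, Option.some.injEq, List.head?_cons] at hu hy
          subst hu; subst hy
          exact hstrict _ _ hstep.1 hlt
        refine ih H P (π ++ [e₁]) w e₁ hcand hstrict ?_ hproper hPchain hwP hwXf ?_ hπ₂ch
          ?_ ?_ hρch' rfl d hρl'
        · intro u v huv ht
          rcases hsame u v huv ht with h | h
          · exact Or.inl h
          · exact Or.inr (listEdge_append_left h)
        · rw [List.nodup_append']
          refine ⟨hπnd, List.nodup_singleton _, ?_⟩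
          intro a ha hae
          simp only [List.mem_singleton] at hae
          subst hae
          exact hne₁ ha
        · rw [List.head?_append, hπh]; rfl
        · simp [List.getLast?_append]
      · -- same time
        by_cases hmem1 : e₁ ∈ π
        · -- e₁ lies on π: restart from the prefix of π
          obtain ⟨l₁, l₂, hπeq⟩ := List.append_of_mem hmem1
          have hpre : (l₁ ++ [e₁]) <+: π := ⟨l₂, by rw [hπeq]; simp⟩
          have hπ₂ch : (l₁ ++ [e₁]).Chain' H.E := hπch.prefix hpre
          have hπ₂nd : (l₁ ++ [e₁]).Nodup := hpre.sublist.nodup hπnd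
          have hπ₂h : (l₁ ++ [e₁]).head? = some w := by
            cases l₁ with
            | nil =>
              rw [hπeq] at hπh
              simpa using hπh
            | cons u t =>
              rw [hπeq] at hπh
              simpa using hπh
          obtain ⟨H₂, hc₂, hstrict₂, hsame₂, hPch₂, hπch₂⟩ := rebuild Gs H.time_respecting
            H.acyclic P (l₁ ++ [e₁])
            (fun u v h => chain'_listEdge hPchain h)
            (fun u v h => chain'_listEdge hπ₂ch h)
            (fun u v h => cand_Gs hcand (chain'_listEdge hPchain h))
            (fun u v h => cand_Gs hcand (chain'_listEdge hπ₂ch h))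
          exact ih H₂ P (l₁ ++ [e₁]) w e₁ hc₂ hstrict₂ hsame₂
            (proper_of_chain hproper hPch₂) hPch₂ hwP hwXf hπ₂nd hπch₂ hπ₂h
            (by simp [List.getLast?_append]) hρch' rfl d hρl'
        · by_cases hmemP : e₁ ∈ P
          · by_cases hXfe₁ : e₁ ∈ Xf
            · -- the bad case: produce a backdoor violation
              exact Or.inr (caseC Gs Xf Yt H P π w e e₁ hcand hproper hPchain hwP hwXf
                hπnd hπch hπh hπl hmemP hXfe₁ hstep.1 heq)
            · -- restart the descent from e₁ ∈ P \ Xf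
              obtain ⟨H₂, hc₂, hstrict₂, hsame₂, hPch₂, hπch₂⟩ := rebuild Gs H.time_respecting
                H.acyclic P [e₁]
                (fun u v h => chain'_listEdge hPchain h)
                (fun u v h => by
                  obtain ⟨i, _, h2⟩ := h
                  rw [List.getElem?_eq_none (by simp)] at h2
                  exact absurd h2 (by simp))
                (fun u v h => cand_Gs hcand (chain'_listEdge hPchain h))
                (fun u v h => by
                  obtain ⟨i, _, h2⟩ := h
                  rw [List.getElem?_eq_none (by simp)] at h2
                  exact absurd h2 (by simp))
              exact ih H₂ P [e₁] e₁ e₁ hc₂ hstrict₂ hsame₂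
                (proper_of_chain hproper hPch₂) hPch₂ hmemP hXfe₁
                (List.nodup_singleton _) (List.isChain_singleton _) rfl rfl hρch' rfl d hρl'
          · -- fresh vertex: extend π, using that there is no return path
            have hnret : ¬ Relation.ReflTransGen H.E e₁ e := by
              intro hr
              rcases hr.cases_head with heq' | ⟨u, hu, hue⟩
              · exact hmem1 (heq' ▸ mem_of_getLast?' hπl)
              · have ht1 : e₁.2 ≤ u.2 := H.time_respecting _ _ hu
                have ht2 : u.2 ≤ e.2 := rtg_time_le H.time_respecting hue
                have hequ : e₁.2 = u.2 := by omega
                rcases hsame e₁ u hu hequ with h | h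
                · exact hmemP (listEdge_mem_left h)
                · exact hmem1 (listEdge_mem_left h)
            set K₂ : FullVert V → FullVert V → Prop :=
              fun u v => H.E u v ∨ (u = e ∧ v = e₁) with hK₂def
            have hK₂t : ∀ u v : FullVert V, K₂ u v → u.2 ≤ v.2 := by
              rintro u v (h | ⟨rfl, rfl⟩)
              · exact H.time_respecting _ _ h
              · omega
            have hK₂a : ∀ v, ¬ Relation.TransGen K₂ v v := ext_acyclic H.acyclic hnret
            have hπ₂K : ∀ u v : FullVert V, listEdge (π ++ [e₁]) u v → K₂ u v := by
              intro u v h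
              rcases listEdge_concat h with h | ⟨h1, h2⟩
              · exact Or.inl (chain'_listEdge hπch h)
              · subst h2
                rw [hπl] at h1
                have : e = u := by simpa using h1
                subst this
                exact Or.inr ⟨rfl, rfl⟩
            have hπ₂Gs : ∀ u v : FullVert V, listEdge (π ++ [e₁]) u v → Gs u.1 v.1 := by
              intro u v h
              rcases listEdge_concat h with h | ⟨h1, h2⟩
              · exact cand_Gs hcand (chain'_listEdge hπch h)
              · subst h2
                rw [hπl] at h1
                have : e = u := by simpa using h1
                subst this
                exact hstep.1
            obtain ⟨H₂, hc₂, hstrict₂, hsame₂, hPch₂, hπch₂⟩ := rebuild Gs hK₂t hK₂a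
              P (π ++ [e₁])
              (fun u v h => Or.inl (chain'_listEdge hPchain h))
              hπ₂K
              (fun u v h => cand_Gs hcand (chain'_listEdge hPchain h))
              hπ₂Gs
            refine ih H₂ P (π ++ [e₁]) w e₁ hc₂ hstrict₂ hsame₂
              (proper_of_chain hproper hPch₂) hPch₂ hwP hwXf ?_ hπch₂ ?_
              (by simp [List.getLast?_append]) hρch' rfl d hρl'
            · rw [List.nodup_append']
              refine ⟨hπnd, List.nodup_singleton _, ?_⟩
              intro a ha hae
              simp only [List.mem_singleton] at hae
              subst hae
              exact hmem1 ha
            · rw [List.head?_append, hπh]; rfl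

end MLsec

/-! ### Part 2: the canonical set blocks everything -/

section Part2
variable {V : Type}

theorem blocks_of_not_bad (Gs : V → V → Prop) (Xf : Set (FullVert V)) (Yt : FullVert V)
    (hbad : ¬ Bad Gs Xf Yt) (G : FTCG V) (hG : Candidate Gs G)
    (vs : List (FullVert V)) (hp : ProperPathFromTo G.E Xf {Yt} vs)
    (hnc : ¬ vs.Chain' G.E) :
    BlocksList G.E ((Set.univ \ NCset Gs Xf Yt) \ Xf) vs := by
  by_contra hnb
  rw [BlocksList] at hnb
  push_neg at hnb
  obtain ⟨hA, hB⟩ := hnb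
  -- no colliders
  have hnocol : ∀ j, ¬ IsCollider G.E vs j := by
    intro j hcol
    obtain ⟨a, b, c, h1j, ha, hb, hc, hEab, hEcb⟩ := hcol
    have hncc : ¬ IsCollider G.E vs (j+1) := by
      rintro ⟨p, q, r, _, hp', hq', hr', hEpq, hErq⟩
      have hpb : p = b := by
        have : vs[j + 1 - 1]? = vs[j]? := by norm_num
        rw [this, hb] at hp'
        exact (Option.some_injective _ hp').symm
      have hqc : q = c := by
        rw [hc] at hq'
        exact (Option.some_injective _ hq').symm
      rw [hpb, hqc] at hEpq
      exact G.acyclic b (Relation.TransGen.head hEpq (.single hEcb))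
    have hcC := hA (j+1) c hc hncc
    have hcXf : c ∉ Xf := by
      intro hXf
      have := hp.2.2.2 (j+1) c hc hXf
      omega
    have hcNC : c ∈ NCset Gs Xf Yt := by
      by_contra h
      exact hcC ⟨⟨trivial, h⟩, hcXf⟩
    obtain ⟨dd, hdesc, hdC⟩ := hB j b hb ⟨a, b, c, h1j, ha, hb, hc, hEab, hEcb⟩
    obtain ⟨⟨Ga, hGa, w, Pa, hprop, hchain, hwmem, hwXf, hwdesc⟩, _⟩ := hcNC
    obtain ⟨π₀, hπch, hπnd, hπh, hπl⟩ := exists_nodup_chain hwdesc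
    obtain ⟨pd, hpdch, hpdnd, hpdh, hpdl⟩ := exists_nodup_chain hdesc
    have hpdne : pd ≠ [] := by rintro rfl; simp at hpdh
    -- the pending step chain ρ := c :: pd
    have hρch : (c :: pd).Chain' (fun u v : FullVert V => Gs u.1 v.1 ∧ u.2 ≤ v.2) := by
      unfold List.Chain'; rw [List.isChain_cons]
      constructor
      · intro y hy
        rw [hpdh] at hy
        simp only [Option.mem_def, Option.some.injEq] at hy
        subst hy
        exact ⟨cand_Gs hG hEcb, G.time_respecting _ _ hEcb⟩
      · exact hpdch.imp (fun {u v} h => ⟨cand_Gs hG h, G.time_respecting _ _ h⟩)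
    obtain ⟨H₂, hc₂, hstrict₂, hsame₂, hPch₂, hπch₂⟩ := rebuild Gs Ga.time_respecting
      Ga.acyclic Pa π₀
      (fun u v h => chain'_listEdge hchain h)
      (fun u v h => chain'_listEdge hπch h)
      (fun u v h => cand_Gs hGa (chain'_listEdge hchain h))
      (fun u v h => cand_Gs hGa (chain'_listEdge hπch h))
    have := ML Gs Xf Yt (c :: pd) H₂ Pa π₀ w c hc₂ hstrict₂ hsame₂
      (proper_of_chain hprop hPch₂) hPch₂ hwmem hwXf hπnd hπch₂ hπh hπl hρch rfl dd
      (by rw [show (c :: pd).getLast? = pd.getLast? from ?_]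
          · exact hpdl
          · cases pd with
            | nil => exact absurd rfl hpdne
            | cons u t => rw [List.getLast?_cons_cons])
    rcases this with hCF | hBad
    · exact hdC.1.2 (mem_NC_of_CF hCF hdC.2)
    · exact hbad hBad
  -- all vertices at positive index are in NC
  have hvert : ∀ k a, vs[k]? = some a → 1 ≤ k → a ∈ NCset Gs Xf Yt := by
    intro k a hk h1k
    have haC := hA k a hk (hnocol k)
    have haXf : a ∉ Xf := by
      intro hXf
      have := hp.2.2.2 k a hk hXf
      omega
    by_contra h
    exact haC ⟨⟨trivial, h⟩, haXf⟩
  obtain ⟨x, hxXf, hxh⟩ := hp.2.1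
  have horch := hp.1.2.2
  -- there is a backward edge
  have hex : ∃ k a b, vs[k]? = some a ∧ vs[k+1]? = some b ∧ G.E b a := by
    by_contra hno
    push_neg at hno
    apply hnc
    apply chain'_of_get?
    intro i a b ha hb
    rcases chain'_get? horch ha hb with h | h
    · exact h
    · exact absurd h (hno i a b ha hb)
  -- push the backward edge to the front
  have hdown : ∀ k a b, vs[k]? = some a → vs[k+1]? = some b → G.E b a →
      ∃ u₁, vs[1]? = some u₁ ∧ G.E u₁ x := by
    intro k
    induction k with
    | zero =>
      intro a b ha hb hE
      have hax : a = x := by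
        rw [← List.head?_eq_getElem?, hxh] at ha
        exact (Option.some_injective _ ha).symm
      subst hax
      exact ⟨b, hb, hE⟩
    | succ k' ihk =>
      intro a b ha hb hE
      have hk'lt : k' < vs.length := by
        have := (List.getElem?_eq_some_iff.1 ha).1
        omega
      obtain ⟨a', ha'⟩ : ∃ a', vs[k']? = some a' :=
        ⟨vs.get ⟨k', hk'lt⟩, List.getElem?_eq_getElem hk'lt⟩
      rcases chain'_get? horch ha' ha with h | h
      · exact absurd ⟨a', a, b, by omega, ha', ha, hb, h, hE⟩ (hnocol (k'+1))
      · exact ihk a' a ha' ha h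
  obtain ⟨k, a, b, hka, hkb, hEba⟩ := hex
  obtain ⟨u₁, hu₁, hEu₁x⟩ := hdown k a b hka hkb hEba
  -- assemble the Bad configuration
  apply hbad
  obtain ⟨b', hb', hlast⟩ := hp.2.2.1
  have hb'Y : b' = Yt := hb'
  refine ⟨x, hxXf, G, hG, vs, ⟨hp.1, hxh, hb'Y ▸ hlast, ⟨u₁, hu₁, hEu₁x⟩, hnocol⟩, ?_⟩
  intro v hv
  obtain ⟨k', hk'⟩ := List.mem_iff_getElem?.1 hv
  rcases Nat.eq_zero_or_pos k' with rfl | h1k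
  · rw [← List.head?_eq_getElem?, hxh] at hk'
    exact Or.inr (Option.some_injective _ hk').symm
  · exact Or.inl (hvert k' v hk' h1k)

theorem common_adjustment_of_not_bad (Gs : V → V → Prop) (Xf : Set (FullVert V))
    (Yt : FullVert V) (hbad : ¬ Bad Gs Xf Yt) :
    CommonAdjustment Gs Xf {Yt} ((Set.univ \ NCset Gs Xf Yt) \ Xf) := by
  intro G hG
  constructor
  · ext a
    simp only [Set.mem_inter_iff, Set.mem_diff, Set.mem_univ, true_and, Set.mem_empty_iff_false,
      iff_false, not_and]
    rintro ⟨hNC, hXf⟩ hForb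
    exact hNC (mem_NC_of_CF (Forb_sub_CF hG hForb) hXf)
  · intro vs hp hnc
    exact blocks_of_not_bad Gs Xf Yt hbad G hG vs hp hnc

end Part2

/-! ### The degenerate case: `NC = ∅` -/

section Special
variable {V : Type}

def DY (Gs : V → V → Prop) (Y : V) (t : ℤ) : Set (FullVert V) :=
  {d | ∃ H : FTCG V, Candidate Gs H ∧ ∃ c : FullVert V, Gs Y c.1 ∧ t ≤ c.2 ∧
    Relation.ReflTransGen H.E c d}

theorem DY_time {Gs : V → V → Prop} {Y : V} {t : ℤ} {d : FullVert V}
    (hd : d ∈ DY Gs Y t) : t ≤ d.2 := by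
  obtain ⟨H, _, c, _, htc, hcd⟩ := hd
  exact le_trans htc (rtg_time_le H.time_respecting hcd)

theorem DY_closed {Gs : V → V → Prop} {Y : V} {t : ℤ} {d d' : FullVert V}
    (hd : d ∈ DY Gs Y t) {G : FTCG V} (hG : Candidate Gs G)
    (hdd : Relation.ReflTransGen G.E d d') : d' ∈ DY Gs Y t := by
  obtain ⟨H, hH, c, hGsYc, htc, hcd⟩ := hd
  have hser : Relation.ReflTransGen Gs c.1 d'.1 :=
    (proj_rtg hH hcd).trans (proj_rtg hG hdd)
  have htcd : c.2 ≤ d'.2 :=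
    le_trans (rtg_time_le H.time_respecting hcd) (rtg_time_le G.time_respecting hdd)
  obtain ⟨sl, hslch, hslnd, hslh, hsll⟩ := exists_nodup_chain hser
  have hslne : sl ≠ [] := by rintro rfl; simp at hslh
  by_cases hlen : 2 ≤ sl.length
  · obtain ⟨H', hH', l, hlch, hlnd, hlh, hll⟩ :=
      realize Gs hslch hslnd hslh hsll hlen c.2 d'.2 htcd
    refine ⟨H', hH', c, hGsYc, htc, ?_⟩
    have h1 : Relation.ReflTransGen H'.E (c.1, c.2) (d'.1, d'.2) :=
      chain'_rtg_head hlch hlh (mem_of_getLast?' hll)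
    exact h1
  · have hcd1 : c.1 = d'.1 := by
      cases sl with
      | nil => exact absurd rfl hslne
      | cons u tl =>
        cases tl with
        | nil =>
          simp only [List.head?_cons, Option.some.injEq] at hslh
          simp only [List.getLast?_singleton, Option.some.injEq] at hsll
          rw [← hslh, hsll]
        | cons v tt => exact absurd (by simp) hlen
    obtain ⟨H0, hH0, _⟩ := exists_Gstrict Gs
    exact ⟨H0, hH0, d', hcd1 ▸ hGsYc, le_trans htc htcd, .refl⟩

/-- In the degenerate case every intervened series equals `Y`. -/
theorem series_eq_Y {Gs : V → V → Prop} {n : ℕ} {X : Fin n → V} {γ : Fin n → ℤ}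
    (hγ : ∀ i, 0 ≤ γ i) {Y : V} {t : ℤ} {Xf : Set (FullVert V)}
    (hXf : Xf = Set.range fun i => (X i, t - γ i))
    (hdesc : ∀ i, Relation.ReflTransGen Gs (X i) Y)
    (hYtXf : (Y, t) ∉ Xf) (hNC : ∀ v, v ∉ NCset Gs Xf (Y, t)) (i : Fin n) : X i = Y := by
  by_contra hne
  obtain ⟨sl, hslch, hslnd, hslh, hsll⟩ := exists_nodup_chain (hdesc i)
  have hslne : sl ≠ [] := by rintro rfl; simp at hslh
  have hlen : 2 ≤ sl.length := by
    cases sl with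
    | nil => exact absurd rfl hslne
    | cons u tl =>
      cases tl with
      | nil =>
        exfalso
        apply hne
        simp only [List.head?_cons, Option.some.injEq] at hslh
        simp only [List.getLast?_singleton, Option.some.injEq] at hsll
        rw [← hslh, hsll]
      | cons v tt => simp
  obtain ⟨H', hH', l, hlch, hlnd, hlh, hll⟩ :=
    realize Gs hslch hslnd hslh hsll hlen (t - γ i) t (by have := hγ i; omega)
  exact hNC _ (Yt_mem_NC_of_path hH' hlch hlnd
    ⟨(X i, t - γ i), by rw [hXf]; exact ⟨i, rfl⟩, hlh⟩ hll hYtXf)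

/-- In the degenerate case `Y` has no self-loop. -/
theorem no_self_loop {Gs : V → V → Prop} {n : ℕ} {X : Fin n → V} {γ : Fin n → ℤ}
    (hγ : ∀ i, 0 ≤ γ i) {Y : V} {t : ℤ} {Xf : Set (FullVert V)}
    (hXf : Xf = Set.range fun i => (X i, t - γ i))
    (hdesc : ∀ i, Relation.ReflTransGen Gs (X i) Y)
    (hYtXf : (Y, t) ∉ Xf) (hNC : ∀ v, v ∉ NCset Gs Xf (Y, t)) (i : Fin n)
    (hYY : Gs Y Y) : False := by
  have hXiY : X i = Y := series_eq_Y hγ hXf hdesc hYtXf hNC i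
  have hγ1 : 1 ≤ γ i := by
    rcases lt_or_ge (γ i) 1 with h | h
    · exfalso
      apply hYtXf
      rw [hXf]
      have h0 : γ i = 0 := by have := hγ i; omega
      exact ⟨i, by simp [hXiY, h0]⟩
    · exact h
  obtain ⟨H0, hH0, hE0⟩ := exists_Gstrict Gs
  have hch : ([((Y : V), t - γ i), (Y, t)] : List (FullVert V)).Chain' H0.E := by
    rw [hE0]
    refine List.isChain_cons_cons.2 ⟨Or.inl ⟨hYY, by omega⟩, List.isChain_singleton _⟩
  have hnd2 : ([((Y : V), t - γ i), (Y, t)] : List (FullVert V)).Nodup := by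
    refine List.nodup_cons.2 ⟨?_, List.nodup_singleton _⟩
    intro hmem
    have h := List.mem_singleton.1 hmem
    have := congrArg Prod.snd h
    simp only at this
    omega
  have hh2 : ∃ x ∈ Xf, ([((Y : V), t - γ i), (Y, t)] : List (FullVert V)).head? = some x :=
    ⟨(X i, t - γ i), by rw [hXf]; exact ⟨i, rfl⟩, by simp [hXiY]⟩
  exact hNC _ (Yt_mem_NC_of_path hH0 hch hnd2 hh2 rfl hYtXf)

end Special

section Special2
variable {V : Type}

/-- Identifiability in the degenerate case `NC = ∅`, `Y_t ∉ X^f`. -/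
theorem special_identifiable {Gs : V → V → Prop} {n : ℕ} {X : Fin n → V} {γ : Fin n → ℤ}
    (hγ : ∀ i, 0 ≤ γ i) {Y : V} {t : ℤ} {Xf : Set (FullVert V)}
    (hXf : Xf = Set.range fun i => (X i, t - γ i))
    (hdesc : ∀ i, Relation.ReflTransGen Gs (X i) Y)
    (hYtXf : (Y, t) ∉ Xf) (hNC : ∀ v, v ∉ NCset Gs Xf (Y, t)) :
    IdentifiableByCommonAdjustment Gs Xf (Y, t) := by
  classical
  set Z : Set (FullVert V) := Set.univ \ (Xf ∪ {(Y, t)} ∪ DY Gs Y t) with hZdef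
  refine ⟨Z, ?_, ?_⟩
  · intro v hv
    refine ⟨trivial, ?_⟩
    intro hmem
    rcases hmem with h | h
    · exact hv.2 (Or.inl (Or.inl h))
    · exact hv.2 (Or.inl (Or.inr h))
  intro G hG
  constructor
  · ext a
    simp only [Set.mem_inter_iff, Set.mem_empty_iff_false, iff_false, not_and]
    intro haZ haF
    have haXf : a ∉ Xf := fun h => haZ.2 (Or.inl (Or.inl h))
    exact hNC a (mem_NC_of_CF (Forb_sub_CF hG haF) haXf)
  intro vs hp hnc
  by_contra hnb
  rw [BlocksList] at hnb
  push_neg at hnb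
  obtain ⟨hA, hB⟩ := hnb
  -- no colliders
  have hnocol : ∀ j, ¬ IsCollider G.E vs j := by
    intro j hcol
    obtain ⟨a, b, c, h1j, ha, hb, hc, hEab, hEcb⟩ := hcol
    have hncc : ¬ IsCollider G.E vs (j+1) := by
      rintro ⟨p, q, r, _, hp', hq', hr', hEpq, hErq⟩
      have hpb : p = b := by
        have : vs[j + 1 - 1]? = vs[j]? := by norm_num
        rw [this, hb] at hp'
        exact (Option.some_injective _ hp').symm
      have hqc : q = c := by
        rw [hc] at hq'
        exact (Option.some_injective _ hq').symm
      rw [hpb, hqc] at hEpq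
      exact G.acyclic b (Relation.TransGen.head hEpq (.single hEcb))
    have hcZ := hA (j+1) c hc hncc
    have hcXf : c ∉ Xf := by
      intro hXfc
      have := hp.2.2.2 (j+1) c hc hXfc
      omega
    -- c ∈ {Yt} ∪ DY
    have hcDY : b ∈ DY Gs Y t := by
      have : c ∈ Xf ∪ {((Y : V), t)} ∪ DY Gs Y t := by
        by_contra h
        exact hcZ ⟨trivial, h⟩
      rcases this with (h | h) | h
      · exact absurd h hcXf
      · -- c = Yt : then b is a child of Yt
        have hcY : c = (Y, t) := h
        subst hcY
        exact ⟨G, hG, b, cand_Gs hG hEcb, G.time_respecting _ _ hEcb, .refl⟩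
      · exact DY_closed h hG (.single hEcb)
    obtain ⟨dd, hdesc', hddZ⟩ := hB j b hb ⟨a, b, c, h1j, ha, hb, hc, hEab, hEcb⟩
    exact hddZ.2 (Or.inr (DY_closed hcDY hG hdesc'))
  -- all positive-index vertices are in {Yt} ∪ DY
  have hvert : ∀ k a, vs[k]? = some a → 1 ≤ k → a = (Y, t) ∨ a ∈ DY Gs Y t := by
    intro k a hk h1k
    have haZ := hA k a hk (hnocol k)
    have haXf : a ∉ Xf := by
      intro hXfa
      have := hp.2.2.2 k a hk hXfa
      omega
    have : a ∈ Xf ∪ {((Y : V), t)} ∪ DY Gs Y t := by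
      by_contra h
      exact haZ ⟨trivial, h⟩
    rcases this with (h | h) | h
    · exact absurd h haXf
    · exact Or.inl h
    · exact Or.inr h
  obtain ⟨x, hxXf, hxh⟩ := hp.2.1
  have horch := hp.1.2.2
  have hex : ∃ k a b, vs[k]? = some a ∧ vs[k+1]? = some b ∧ G.E b a := by
    by_contra hno
    push_neg at hno
    apply hnc
    apply chain'_of_get?
    intro i a b ha hb
    rcases chain'_get? horch ha hb with h | h
    · exact h
    · exact absurd h (hno i a b ha hb)
  have hdown : ∀ k a b, vs[k]? = some a → vs[k+1]? = some b → G.E b a →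
      ∃ u₁, vs[1]? = some u₁ ∧ G.E u₁ x := by
    intro k
    induction k with
    | zero =>
      intro a b ha hb hE
      have hax : a = x := by
        rw [← List.head?_eq_getElem?, hxh] at ha
        exact (Option.some_injective _ ha).symm
      subst hax
      exact ⟨b, hb, hE⟩
    | succ k' ihk =>
      intro a b ha hb hE
      have hk'lt : k' < vs.length := by
        have := (List.getElem?_eq_some_iff.1 ha).1
        omega
      obtain ⟨a', ha'⟩ : ∃ a', vs[k']? = some a' :=
        ⟨vs.get ⟨k', hk'lt⟩, List.getElem?_eq_getElem hk'lt⟩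
      rcases chain'_get? horch ha' ha with h | h
      · exact absurd ⟨a', a, b, by omega, ha', ha, hb, h, hE⟩ (hnocol (k'+1))
      · exact ihk a' a ha' ha h
  obtain ⟨k, a, b, hka, hkb, hEba⟩ := hex
  obtain ⟨u₁, hu₁, hEu₁x⟩ := hdown k a b hka hkb hEba
  -- identify x as an intervention
  have hxXf' := hxXf
  rw [hXf] at hxXf'
  obtain ⟨i, hi⟩ := hxXf'
  have hXiY : X i = Y := series_eq_Y hγ hXf hdesc hYtXf hNC i
  have hxval : x = ((Y : V), t - γ i) := by
    rw [← hi]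
    show (X i, t - γ i) = ((Y : V), t - γ i)
    rw [hXiY]
  have hγ1 : 1 ≤ γ i := by
    rcases lt_or_ge (γ i) 1 with h | h
    · exfalso
      apply hYtXf
      rw [hXf]
      have h0 : γ i = 0 := by have := hγ i; omega
      exact ⟨i, by simp [hXiY, h0]⟩
    · exact h
  rcases hvert 1 u₁ hu₁ le_rfl with hYtu | hDYu
  · -- edge from Yt into x gives a self-loop at Y
    subst hYtu
    have hGsYY : Gs Y Y := by
      have := cand_Gs hG hEu₁x
      rwa [hxval] at this
    exact no_self_loop hγ hXf hdesc hYtXf hNC i hGsYY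
  · -- time contradiction
    have ht1 : t ≤ u₁.2 := DY_time hDYu
    have ht2 : u₁.2 ≤ x.2 := G.time_respecting _ _ hEu₁x
    rw [hxval] at ht2
    simp only at ht2
    omega

end Special2

end Stmt3Aux

open Stmt3Aux in

/-- the total effect is identifiable by common adjustment iff no candidate
FTCG contains a collider-free backdoor path from an intervention to `Y_t` remaining in
`NC ∪ {that intervention}`; in that case `C = (V^f ∖ NC) ∖ X^f` is a common adjustment
set. -/
theorem stmt3 {V : Type} [Fintype V] (Gs : V → V → Prop) (hGs : IsSCG Gs)
    (n : ℕ) (X : Fin n → V) (γ : Fin n → ℤ) (hγ : ∀ i, 0 ≤ γ i) (Y : V) (t : ℤ)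
    (Xf : Set (FullVert V)) (hXf : Xf = Set.range fun i => (X i, t - γ i))
    (hdesc : ∀ i, Relation.ReflTransGen Gs (X i) Y) :
    (IdentifiableByCommonAdjustment Gs Xf (Y, t) ↔
      (∀ (i : Fin n) (G : FTCG V), Candidate Gs G →
        ¬ ∃ vs : List (FullVert V),
            IsColliderFreeBackdoor G.E (X i, t - γ i) (Y, t) vs ∧
            ∀ v ∈ vs, v ∈ NCset Gs Xf (Y, t) ∪ {(X i, t - γ i)})) ∧
    ((∀ (i : Fin n) (G : FTCG V), Candidate Gs G →
        ¬ ∃ vs : List (FullVert V),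
            IsColliderFreeBackdoor G.E (X i, t - γ i) (Y, t) vs ∧
            ∀ v ∈ vs, v ∈ NCset Gs Xf (Y, t) ∪ {(X i, t - γ i)}) →
      CommonAdjustment Gs Xf {(Y, t)}
        ((Set.univ \ NCset Gs Xf (Y, t)) \ Xf)) := by
  classical
  have hbridge : (∀ (i : Fin n) (G : FTCG V), Candidate Gs G →
      ¬ ∃ vs : List (FullVert V),
          IsColliderFreeBackdoor G.E (X i, t - γ i) (Y, t) vs ∧
          ∀ v ∈ vs, v ∈ NCset Gs Xf (Y, t) ∪ {(X i, t - γ i)}) → ¬ Bad Gs Xf (Y, t) := by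
    intro hRHS hb
    obtain ⟨x0, hx0, H, hcand, bd, hbd, hmem⟩ := hb
    rw [hXf] at hx0
    obtain ⟨i, hi⟩ := hx0
    apply hRHS i H hcand
    refine ⟨bd, ?_, ?_⟩
    · rw [show (X i, t - γ i) = x0 from hi]; exact hbd
    · rw [show (X i, t - γ i) = x0 from hi]; exact hmem
  have heasy : IdentifiableByCommonAdjustment Gs Xf (Y, t) →
      ∀ (i : Fin n) (G : FTCG V), Candidate Gs G →
        ¬ ∃ vs : List (FullVert V),
            IsColliderFreeBackdoor G.E (X i, t - γ i) (Y, t) vs ∧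
            ∀ v ∈ vs, v ∈ NCset Gs Xf (Y, t) ∪ {(X i, t - γ i)} := by
    rintro ⟨Z, hZsub, hZcom⟩ i G hG ⟨vs, hbd, hmem⟩
    obtain ⟨hpl, hhead, hlast, ⟨u₁, hu₁, hEu₁x⟩, hnocol⟩ := hbd
    have hxXf : (X i, t - γ i) ∈ Xf := by rw [hXf]; exact ⟨i, rfl⟩
    have hproper : ProperPathFromTo G.E Xf {(Y, t)} vs := by
      refine ⟨hpl, ⟨(X i, t - γ i), hxXf, hhead⟩, ⟨(Y, t), rfl, hlast⟩, ?_⟩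
      intro k a hget haXf
      have hamem := hmem a (List.mem_of_getElem? hget)
      have hax : a = (X i, t - γ i) := by
        rcases hamem with h | h
        · exact absurd haXf (NC_not_Xf h)
        · exact h
      have h0 : vs[0]? = some a := by
        rw [← List.head?_eq_getElem?, hhead, hax]
      exact (List.getElem?_inj (List.getElem?_eq_some_iff.1 hget).1 hpl.2.1).1 (by rw [hget, h0])
    have hncE : ¬ vs.Chain' G.E := by
      intro hch
      have h0 : vs[0]? = some (X i, t - γ i) := by rw [← List.head?_eq_getElem?]; exact hhead
      have hEx : G.E (X i, t - γ i) u₁ := chain'_get? hch h0 hu₁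
      exact G.acyclic _ (Relation.TransGen.head hEx (.single hEu₁x))
    rcases (hZcom G hG).2 vs hproper hncE with ⟨k, a, hget, hncol, haZ⟩ | ⟨k, a, hget, hcol, _⟩
    · rcases hmem a (List.mem_of_getElem? hget) with h | h
      · obtain ⟨⟨G', hG', hf⟩, _⟩ := h
        have h1 := (hZcom G' hG').1
        have h2 : a ∈ Z ∩ Forb G'.E Xf {(Y, t)} := ⟨haZ, hf⟩
        rw [h1] at h2
        exact h2
      · have hax : a = (X i, t - γ i) := h
        exact (hZsub haZ).2 (Or.inl (by rw [hax]; exact hxXf))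
    · exact hnocol k hcol
  refine ⟨⟨heasy, ?_⟩, ?_⟩
  · -- hard direction
    intro hRHS
    have hbad := hbridge hRHS
    by_cases hYtXf : (Y, t) ∈ Xf
    · refine ⟨∅, by simp, ?_⟩
      intro G hG
      refine ⟨by simp, ?_⟩
      intro vs hp hnc
      exfalso
      obtain ⟨b, hb, hlast⟩ := hp.2.2.1
      have hbY : b = (Y, t) := hb
      have hne : vs ≠ [] := hp.1.1
      have hget : vs[vs.length - 1]? = some b := by
        rw [← List.getLast?_eq_getElem?]; exact hlast
      have h0 := hp.2.2.2 (vs.length - 1) b hget (by rw [hbY]; exact hYtXf)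
      have hlen : vs.length = 1 := by
        cases vs with
        | nil => exact absurd rfl hne
        | cons u t' =>
          simp only [List.length_cons] at h0 ⊢
          omega
      obtain ⟨v, rfl⟩ := List.length_eq_one_iff.1 hlen
      exact hnc (List.isChain_singleton v)
    · by_cases hYtNC : (Y, t) ∈ NCset Gs Xf (Y, t)
      · refine ⟨(Set.univ \ NCset Gs Xf (Y, t)) \ Xf, ?_,
          common_adjustment_of_not_bad Gs Xf (Y, t) hbad⟩
        intro v hv
        refine ⟨trivial, ?_⟩
        rintro (h | h)
        · exact hv.2 h
        · have hveq : v = (Y, t) := h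
          exact hv.1.2 (by rw [hveq]; exact hYtNC)
      · have hNCe : ∀ v, v ∉ NCset Gs Xf (Y, t) := fun v hv =>
          hYtNC (Yt_mem_NC_of_NC_nonempty hv hYtXf)
        exact special_identifiable hγ hXf hdesc hYtXf hNCe
  · intro hRHS
    exact common_adjustment_of_not_bad Gs Xf (Y, t) (hbridge hRHS)
end

section
/- Let G^f be a candidate FTCG for an SCG G^s, with interventions X^f and effect Y_t such that Y_t ∈ CF. Let π be a proper non-causal path in G^f from some X^i_{t−γ_i} ∈ X^f to Y_t that contains at least one vertex outside CF ∪ {X^i_{t−γ_i}}. Then π contains a non-collider vertex belonging to (V^f ∖ NC) ∖ X^f; in particular π is blocked by the set C = (V^f ∖ NC) ∖ X^f. -/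
open Classical Relation

variable {α : Type*}

private lemma aux_le_of_transGen {β : Type*} (m : β → ℤ) {R : β → β → Prop}
    (hR : ∀ x y, R x y → m x ≤ m y) {v w : β} (h : Relation.TransGen R v w) : m v ≤ m w := by
  induction h with
  | single h => exact hR _ _ h
  | tail _ h ih => exact ih.trans (hR _ _ h)

private lemma aux_transGen_eq {β : Type*} (m : β → ℤ) {R : β → β → Prop}
    (hR : ∀ x y, R x y → m x ≤ m y) {v w : β} (h : Relation.TransGen R v w) (hm : m w ≤ m v) :
    Relation.TransGen (fun x y => R x y ∧ m x = m y) v w := by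
  induction h with
  | single h => exact .single ⟨h, le_antisymm (hR _ _ h) hm⟩
  | @tail x w hvx hxw ih =>
      have h1 : m v ≤ m x := aux_le_of_transGen m hR hvx
      have h2 : m x ≤ m w := hR _ _ hxw
      exact (ih (by omega)).tail ⟨hxw, by omega⟩

private lemma aux_split {β : Type*} {R : β → β → Prop} (Dv Cv : β) {v w : β}
    (h : Relation.TransGen (fun x y => R x y ∨ (x = Dv ∧ y = Cv)) v w) :
    Relation.TransGen R v w ∨
      (Relation.ReflTransGen R v Dv ∧ Relation.ReflTransGen R Cv w) := by
  induction h with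
  | single h =>
      rcases h with h | ⟨rfl, rfl⟩
      · exact .inl (.single h)
      · exact .inr ⟨.refl, .refl⟩
  | tail hvx hxw ih =>
      rcases hxw with hxw | ⟨rfl, rfl⟩
      · rcases ih with ih | ⟨h1, h2⟩
        · exact .inl (ih.tail hxw)
        · exact .inr ⟨h1, h2.tail hxw⟩
      · rcases ih with ih | ⟨h1, h2⟩
        · exact .inr ⟨ih.to_reflTransGen, .refl⟩
        · exact .inr ⟨h1, .refl⟩

private lemma aux_reach_avoid {β : Type*} {R : β → β → Prop} (Cv : β) {w d : β}
    (h : Relation.ReflTransGen R w d) :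
    Relation.ReflTransGen (fun x y => R x y ∧ x ≠ Cv) w d ∨ Relation.ReflTransGen R w Cv := by
  induction h with
  | refl => exact .inl .refl
  | @tail x d hwx hxd ih =>
      rcases ih with ih | ih
      · by_cases hx : x = Cv
        · exact .inr (hx ▸ Relation.ReflTransGen.mono (fun a b hab => hab.1) _ _ ih)
        · exact .inl (ih.tail ⟨hxd, hx⟩)
      · exact .inr ih

private lemma aux_chain'_imp_mem {β : Type*} {R S : β → β → Prop} :
    ∀ l : List β, l.Chain' R → (∀ x ∈ l, ∀ y ∈ l, R x y → S x y) → l.Chain' S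
  | [], _, _ => List.isChain_nil
  | [a], _, _ => List.isChain_singleton a
  | a :: b :: l, h, hm => by
      simp only [List.Chain', List.isChain_cons_cons] at h ⊢
      exact ⟨hm a (by simp) b (by simp) h.1,
        aux_chain'_imp_mem (b :: l) h.2
          (fun x hx y hy => hm x (List.mem_cons_of_mem a hx) y (List.mem_cons_of_mem a hy))⟩

private lemma cf_child {V : Type} (Gs : V → V → Prop) (Xf : Set (FullVert V)) (Yt : FullVert V)
    (G : FTCG V) (hG : Candidate Gs G) {Dv Cv : FullVert V}
    (hD : Dv ∈ CF Gs Xf Yt) (hE : G.E Dv Cv) (hCX : Cv ∉ Xf) : Cv ∈ CF Gs Xf Yt := by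
  by_contra hCCF
  have hD0 := hD
  obtain ⟨G', hG', w, p, hp, hchain, hwp, hwX, hwD⟩ := hD
  have hCD : Cv ≠ Dv := fun h => hCCF (h ▸ hD0)
  have hCp : Cv ∉ p := fun hmem => hCCF ⟨G', hG', Cv, p, hp, hchain, hmem, hCX, .refl⟩
  have hwC : ¬ Desc G'.E w Cv := fun hd => hCCF ⟨G', hG', w, p, hp, hchain, hwp, hwX, hd⟩
  have hreach : Relation.ReflTransGen (fun x y => G'.E x y ∧ x ≠ Cv) w Dv := by
    rcases aux_reach_avoid Cv hwD with h | h
    · exact h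
    · exact absurd h hwC
  set H : FullVert V → FullVert V → Prop := fun x y =>
    (G'.E x y ∧ x ≠ Cv) ∨ (∃ b, G'.E Cv b ∧ y = b ∧ x = (Cv.1, b.2 - 1)) ∨ (x = Dv ∧ y = Cv)
    with hHdef
  have htr : ∀ a b : FullVert V, H a b → a.2 ≤ b.2 := by
    rintro a b (⟨h, -⟩ | ⟨c, hc, rfl, rfl⟩ | ⟨rfl, rfl⟩)
    · exact G'.time_respecting _ _ h
    · simp
    · exact G.time_respecting _ _ hE
  have hac : ∀ v, ¬ Relation.TransGen H v v := by
    intro v hv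
    have h2 := aux_transGen_eq (fun x => x.2) htr hv le_rfl
    have h3 : Relation.TransGen
        (fun x y : FullVert V => (G'.E x y ∧ x ≠ Cv) ∨ (x = Dv ∧ y = Cv)) v v := by
      refine Relation.TransGen.mono ?_ _ _ h2
      rintro x y ⟨(h | ⟨c, hc, rfl, rfl⟩ | h), hm⟩
      · exact .inl h
      · exfalso; simp at hm
      · exact .inr h
    rcases aux_split Dv Cv h3 with h4 | ⟨h4, h5⟩
    · exact G'.acyclic v (Relation.TransGen.mono (fun a b hab => hab.1) _ _ h4)
    · have h6 : Relation.ReflTransGen (fun x y => G'.E x y ∧ x ≠ Cv) Cv Dv := h5.trans h4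
      rcases h6.cases_head with h7 | ⟨c, ⟨-, h8⟩, -⟩
      · exact hCD h7
      · exact h8 rfl
  let HG : FTCG V := ⟨H, htr, hac⟩
  have hHcand : Candidate Gs HG := by
    unfold Candidate
    funext A B
    apply propext
    constructor
    · rintro ⟨s, s', hss⟩
      rcases hss with ⟨h, -⟩ | ⟨c, hc, hy, hx⟩ | ⟨h1, h2⟩
      · rw [← hG']; exact ⟨s, s', h⟩
      · have hA : A = Cv.1 := congrArg Prod.fst hx
        have hAC : (A, Cv.2) = Cv := by rw [hA]
        rw [← hG']
        exact ⟨Cv.2, s', by rw [hAC, hy]; exact hc⟩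
      · rw [← hG]; exact ⟨s, s', by rw [h1, h2]; exact hE⟩
    · intro hAB
      rw [← hG'] at hAB
      obtain ⟨s, s', h⟩ := hAB
      by_cases hx : (A, s) = Cv
      · refine ⟨s' - 1, s', .inr (.inl ⟨(B, s'), ?_, rfl, ?_⟩)⟩
        · rw [← hx]; exact h
        · have : Cv.1 = A := (congrArg Prod.fst hx).symm
          rw [this]
      · exact ⟨s, s', .inl ⟨h, hx⟩⟩
  apply hCCF
  refine ⟨HG, hHcand, w, p, ?_, ?_, hwp, hwX, ?_⟩
  · obtain ⟨⟨hne, hnd, hch⟩, hhd, hlast, hprop⟩ := hp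
    refine ⟨⟨hne, hnd, ?_⟩, hhd, hlast, hprop⟩
    exact aux_chain'_imp_mem p hchain
      (fun x hx y hy hxy => .inl (.inl ⟨hxy, fun h => hCp (h ▸ hx)⟩))
  · exact aux_chain'_imp_mem p hchain
      (fun x hx y hy hxy => .inl ⟨hxy, fun h => hCp (h ▸ hx)⟩)
  · have hwDH : Relation.ReflTransGen HG.E w Dv :=
      Relation.ReflTransGen.mono (fun a b hab => .inl hab) _ _ hreach
    exact hwDH.tail (.inr (.inr ⟨rfl, rfl⟩))

/-- a proper non-causal path from an intervention to `Y_t` leaving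
`CF ∪ {that intervention}` contains a non-collider in `C = (V^f ∖ NC) ∖ X^f`, hence is
blocked by `C`. -/
theorem stmt4 {V : Type} [Fintype V] (Gs : V → V → Prop) (hGs : IsSCG Gs)
    (n : ℕ) (X : Fin n → V) (γ : Fin n → ℤ) (hγ : ∀ i, 0 ≤ γ i) (Y : V) (t : ℤ)
    (Xf : Set (FullVert V)) (hXf : Xf = Set.range fun i => (X i, t - γ i))
    (G : FTCG V) (hG : Candidate Gs G)
    (hYCF : (Y, t) ∈ CF Gs Xf (Y, t))
    (i : Fin n) (vs : List (FullVert V))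
    (hπ : ProperPathFromTo G.E Xf {(Y, t)} vs)
    (hhead : vs.head? = some (X i, t - γ i))
    (hnoncausal : ¬ vs.Chain' G.E)
    (hout : ∃ v ∈ vs, v ∉ CF Gs Xf (Y, t) ∪ {(X i, t - γ i)}) :
    (∃ (j : ℕ) (a : FullVert V), vs[j]? = some a ∧ ¬ IsCollider G.E vs j ∧
        a ∈ (Set.univ \ NCset Gs Xf (Y, t)) \ Xf) ∧
    BlocksList G.E ((Set.univ \ NCset Gs Xf (Y, t)) \ Xf) vs := by
  classical
  set Xi : FullVert V := (X i, t - γ i) with hXidef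
  have hXiXf : Xi ∈ Xf := by rw [hXf]; exact ⟨i, rfl⟩
  obtain ⟨⟨hne, hnd, hch⟩, hhd', hlast', hprop⟩ := hπ
  set J : Set ℕ := {j | ∃ a, vs[j]? = some a ∧ a ∉ CF Gs Xf (Y, t) ∪ {Xi}} with hJdef
  obtain ⟨v, hvmem, hvout⟩ := hout
  have hJne : J.Nonempty := by
    obtain ⟨n, hn⟩ := List.mem_iff_get.mp hvmem
    exact ⟨n.1, v, by rw [List.getElem?_eq_getElem n.2]; exact congrArg some hn, hvout⟩
  have hJbdd : BddAbove J := by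
    refine ⟨vs.length, fun j hj => ?_⟩
    obtain ⟨a, ha, -⟩ := hj
    obtain ⟨h, -⟩ := List.getElem?_eq_some_iff.mp ha
    exact h.le
  set j := sSup J with hjdef
  obtain ⟨C, hCget, hCout⟩ : j ∈ J := Nat.sSup_mem hJne hJbdd
  have hCCF : C ∉ CF Gs Xf (Y, t) := fun h => hCout (Or.inl h)
  have hCXi : C ≠ Xi := fun h => hCout (Or.inr h)
  have hjlt : j < vs.length := by
    obtain ⟨h, -⟩ := List.getElem?_eq_some_iff.mp hCget; exact h
  have hYlast : vs[vs.length - 1]? = some (Y, t) := by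
    obtain ⟨b, hb, hb'⟩ := hlast'
    rw [show b = (Y, t) from hb] at hb'
    rw [← List.getLast?_eq_getElem?]
    exact hb'
  have hCne : C ≠ (Y, t) := fun h => hCCF (h ▸ hYCF)
  have hj1 : j + 1 < vs.length := by
    rcases Nat.lt_or_ge (j + 1) vs.length with h | h
    · exact h
    · exfalso
      have hje : j = vs.length - 1 := by omega
      rw [hje, hYlast] at hCget
      exact hCne (Option.some.inj hCget).symm
  set Dv := vs.get ⟨j + 1, hj1⟩ with hDvdef
  have hDget : vs[j + 1]? = some Dv := List.getElem?_eq_getElem hj1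
  have hDS : Dv ∈ CF Gs Xf (Y, t) ∪ {Xi} := by
    by_contra h
    have hmem : j + 1 ∈ J := ⟨Dv, hDget, h⟩
    have := le_csSup hJbdd hmem
    omega
  have hDXf : Dv ∉ Xf := by
    intro h
    have := hprop (j + 1) Dv hDget h
    omega
  have hDCF : Dv ∈ CF Gs Xf (Y, t) := by
    rcases hDS with h | h
    · exact h
    · exact absurd (by rw [show Dv = Xi from h]; exact hXiXf) hDXf
  have hCXf : C ∉ Xf := by
    intro h
    have hj0 := hprop j C hCget h
    rw [hj0, ← List.head?_eq_getElem?, hhead] at hCget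
    exact hCXi (Option.some.inj hCget).symm
  have hnc : ¬ IsCollider G.E vs j := by
    rintro ⟨a, b, c, h1, hga, hgb, hgc, hEab, hEcb⟩
    have hbC : b = C := Option.some.inj (hgb.symm.trans hCget)
    have hcD : c = Dv := Option.some.inj (hgc.symm.trans hDget)
    rw [hbC, hcD] at hEcb
    exact hCCF (cf_child Gs Xf (Y, t) G hG hDCF hEcb hCXf)
  have hmemC : C ∈ (Set.univ \ NCset Gs Xf (Y, t)) \ Xf :=
    ⟨⟨trivial, fun h => hCCF h.1⟩, hCXf⟩
  exact ⟨⟨j, C, hCget, hnc, hmemC⟩, Or.inl ⟨j, C, hCget, hnc, hmemC⟩⟩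
end

section
/- Let G^s be an SCG with interventions X^f and effect Y_t, and assume no candidate FTCG contains a directed path from Y_t to any intervention remaining in NC ∪ {that intervention}. Then the following are equivalent: (1) there exist an intervention X^i_{t−γ_i}, a vertex F_{t_f}, and a candidate FTCG containing the fork path X^i_{t−γ_i} ⇜ F_{t_f} ⇝ Y_t (two directed paths from F_{t_f}, one to X^i_{t−γ_i} and one to Y_t, intersecting only at F_{t_f}) remaining entirely in NC ∪ {X^i_{t−γ_i}}; (2) there exist an intervention X^i_{t−γ_i} and a vertex F_{t_f} such that F_{t_f} is X^i_{t−γ_i}-NC-accessible and Y_t-NC-accessible. -/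
open Classical Relation

variable {α : Type*}

section AuxLemmas
variable {α : Type*} {r : α → α → Prop} {S : Set α}

lemma aux_mem_of_getLast? {l : List α} {b : α} (h : l.getLast? = some b) : b ∈ l := by
  obtain ⟨hh, rfl⟩ := List.mem_getLast?_eq_getLast (x := b) (l := l) h
  exact List.getLast_mem hh

lemma aux_mem_of_head? {l : List α} {a : α} (h : l.head? = some a) : a ∈ l := by
  cases l <;> simp_all

lemma aux_getLast?_eq_get? (l : List α) : l.getLast? = l[l.length - 1]? := by
  exact List.getLast?_eq_getElem?

lemma aux_rel_of_listEdge {l : List α} {i : ℕ} {a b : α} (hc : l.Chain' r)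
    (ha : l[i]? = some a) (hb : l[i+1]? = some b) : r a b := by
  rw [List.getElem?_eq_some_iff] at ha hb
  obtain ⟨h1, rfl⟩ := ha; obtain ⟨h2, rfl⟩ := hb
  exact List.isChain_iff_getElem.1 hc i (by omega)

lemma aux_head_ne_last {l : List α} {a b : α} (hn : l.Nodup) (hlen : 2 ≤ l.length)
    (ha : l.head? = some a) (hb : l.getLast? = some b) : a ≠ b := by
  match l, hn, hlen, ha, hb with
  | x :: y :: t, hn, _, ha, hb =>
    have hx : a = x := by simpa using ha.symm
    have hbmem : b ∈ y :: t := by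
      have : (y :: t).getLast? = some b := by
        rw [List.getLast?_cons_cons] at hb; exact hb
      exact aux_mem_of_getLast? this
    subst hx
    rintro rfl
    exact (List.nodup_cons.1 hn).1 hbmem

lemma aux_transGen_of_chain' {l : List α} {a b : α} (hc : l.Chain' r)
    (hlen : 2 ≤ l.length) (ha : l.head? = some a) (hb : l.getLast? = some b) :
    Relation.TransGen r a b := by
  match l, hc, hlen, ha, hb with
  | x :: y :: t, hc, _, ha, hb =>
    have hx : a = x := by simpa using ha.symm
    subst hx
    have hch : List.Chain r a (y :: t) := hc
    obtain ⟨hr, hch'⟩ := List.chain_cons.1 hch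
    have hlast : (y :: t).getLast (by simp) = b := by
      have := List.getLast?_eq_getLast_of_ne_nil (l := y :: t) (by simp)
      rw [List.getLast?_cons_cons] at hb
      rw [this] at hb; exact (Option.some_inj.1 hb)
    have : Relation.ReflTransGen r y b :=
      List.relationReflTransGen_of_exists_isChain_cons t hch' hlast
    exact Relation.TransGen.head' hr this

lemma aux_reflTransGen_of_mem_chain' : ∀ {l : List α} {v b : α}, l.Chain' r → v ∈ l →
    l.getLast? = some b → Relation.ReflTransGen r v b := by
  intro l
  induction l with
  | nil => intro v b _ h; simp at h
  | cons x t ih =>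
    intro v b hc hv hb
    rcases List.mem_cons.1 hv with rfl | hv
    · have hch : List.Chain r v t := hc
      match t, hch, hb with
      | [], _, hb =>
        simp only [List.getLast?_singleton, Option.some_inj] at hb
        subst hb; exact Relation.ReflTransGen.refl
      | y :: t', hch, hb =>
        have hlast : (v :: y :: t').getLast (by simp) = b := by
          have := List.getLast?_eq_getLast_of_ne_nil (l := v :: y :: t') (by simp)
          rw [this] at hb; exact Option.some_inj.1 hb
        exact List.relationReflTransGen_of_exists_isChain_cons _ hch hlast
    · have ht : t ≠ [] := List.ne_nil_of_mem hv
      have hb' : t.getLast? = some b := by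
        match t, ht, hb with
        | y :: t', _, hb => rw [List.getLast?_cons_cons] at hb; exact hb
      exact ih (List.IsChain.tail hc) hv hb'

lemma aux_mem_S_of_chain' (hrS : ∀ a b, r a b → a ∈ S ∧ b ∈ S) :
    ∀ {l : List α}, l.Chain' r → 2 ≤ l.length → ∀ v ∈ l, v ∈ S := by
  intro l
  induction l with
  | nil => simp
  | cons x t ih =>
    intro hc hlen v hv
    match t, hc, hlen, hv with
    | y :: t', hc, _, hv =>
      obtain ⟨hr, hc'⟩ := List.isChain_cons_cons.1 hc
      rcases List.mem_cons.1 hv with rfl | hv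
      · exact (hrS _ _ hr).1
      · rcases List.mem_cons.1 hv with rfl | hv'
        · exact (hrS _ _ hr).2
        · have hlen2 : 2 ≤ (y :: t').length := by
            have := List.length_pos_iff.2 (List.ne_nil_of_mem hv')
            simp only [List.length_cons] at *; omega
          exact ih hc' hlen2 v (List.mem_cons_of_mem _ hv')

lemma aux_chain'_restrict {E : α → α → Prop} {l : List α} (hc : l.Chain' E)
    (hm : ∀ v ∈ l, v ∈ S) : l.Chain' (fun x y => E x y ∧ x ∈ S ∧ y ∈ S) := by
  change List.IsChain _ _ at hc ⊢
  rw [List.isChain_iff_getElem] at hc ⊢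
  intro i h
  exact ⟨hc i h, hm _ (List.getElem_mem _), hm _ (List.getElem_mem _)⟩

lemma aux_first_mem {E : α → α → Prop} {a b : α}
    (h : Relation.TransGen (fun x y => E x y ∧ x ∈ S ∧ y ∈ S) a b) : a ∈ S := by
  induction h with
  | single h => exact h.2.1
  | tail _ _ ih => exact ih
lemma aux_chain_nodup : ∀ (n : ℕ) (a b : α) (l : List α), l.length ≤ n → a ≠ b →
    List.Chain r a l → (a :: l).getLast? = some b →
    ∃ l', List.Chain r a l' ∧ (a :: l').getLast? = some b ∧ (a :: l').Nodup ∧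
      ∀ x ∈ l', x ∈ l := by
  intro n
  induction n with
  | zero =>
    intro a b l hl hne hc hlast
    have : l = [] := List.eq_nil_of_length_eq_zero (Nat.le_zero.1 hl)
    subst this; simp at hlast; exact absurd hlast hne
  | succ n ih =>
    intro a b l hl hne hc hlast
    by_cases ha : a ∈ l
    · obtain ⟨l₁, l₂, rfl⟩ := List.append_of_mem ha
      have hc₂ : List.Chain r a l₂ := (List.isChain_cons_split.1 hc).2
      have hlast₂ : (a :: l₂).getLast? = some b := by
        have e : a :: (l₁ ++ a :: l₂) = (a :: l₁) ++ (a :: l₂) := by simp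
        rw [e, List.getLast?_append_of_ne_nil _ (by simp)] at hlast
        exact hlast
      have hlen : l₂.length ≤ n := by
        have := hl; simp [List.length_append] at this; omega
      obtain ⟨l', h1, h2, h3, h4⟩ := ih a b l₂ hlen hne hc₂ hlast₂
      exact ⟨l', h1, h2, h3, fun x hx => by
        have := h4 x hx; simp [List.mem_append]; tauto⟩
    · match l, hc, hlast with
      | [], _, hlast => simp at hlast; exact absurd hlast hne
      | c :: l'', hc, hlast =>
        obtain ⟨hrac, hc'⟩ := List.chain_cons.1 hc
        by_cases hcb : c = b
        · subst hcb
          refine ⟨[c], by simp [List.Chain, hrac], by simp, ?_, by simp⟩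
          simp [List.nodup_cons]
          intro h; exact ha (by simp [h])
        · have hlast' : (c :: l'').getLast? = some b := by
            rwa [List.getLast?_cons_cons] at hlast
          have hlen : l''.length ≤ n := by simp at hl; omega
          obtain ⟨l', h1, h2, h3, h4⟩ := ih c b l'' hlen hcb hc' hlast'
          refine ⟨c :: l', List.chain_cons.2 ⟨hrac, h1⟩, ?_, ?_, ?_⟩
          · rwa [List.getLast?_cons_cons]
          · rw [List.nodup_cons]
            refine ⟨?_, h3⟩
            intro hmem
            rcases List.mem_cons.1 hmem with rfl | hmem'
            · exact ha (by simp)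
            · exact ha (by simp [h4 _ hmem'])
          · intro x hx
            rcases List.mem_cons.1 hx with rfl | hx'
            · simp
            · simp [h4 _ hx']

lemma aux_exists_nodup_dirlist {a b : α} (h : Relation.TransGen r a b) (hne : a ≠ b) :
    ∃ vs : List α, vs.Chain' r ∧ vs.Nodup ∧ vs.head? = some a ∧
      vs.getLast? = some b ∧ 2 ≤ vs.length := by
  obtain ⟨l, hc, hlast⟩ := List.exists_isChain_cons_of_relationReflTransGen h.to_reflTransGen
  have hlast? : (a :: l).getLast? = some b := by
    rw [List.getLast?_eq_getLast_of_ne_nil (by simp), hlast]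
  obtain ⟨l', h1, h2, h3, -⟩ := aux_chain_nodup l.length a b l le_rfl hne hc hlast?
  have hl' : l' ≠ [] := by
    rintro rfl; simp at h2; exact hne h2
  refine ⟨a :: l', h1, h3, rfl, h2, ?_⟩
  match l', hl' with
  | c :: t, _ => simp

lemma aux_last_sat (P : α → Prop) : ∀ (l : List α), (∃ v ∈ l, P v) →
    ∃ f t, (f :: t) <:+ l ∧ P f ∧ ∀ x ∈ t, ¬ P x := by
  intro l
  induction l with
  | nil => rintro ⟨v, hv, -⟩; simp at hv
  | cons a l' ih =>
    intro hex
    by_cases h' : ∃ v ∈ l', P v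
    · obtain ⟨f, t, hsuf, hf, ht⟩ := ih h'
      exact ⟨f, t, hsuf.trans (List.suffix_cons a l'), hf, ht⟩
    · obtain ⟨v, hv, hP⟩ := hex
      rcases List.mem_cons.1 hv with rfl | hv'
      · exact ⟨v, l', List.suffix_rfl, hP, fun x hx hPx => h' ⟨x, hx, hPx⟩⟩
      · exact absurd ⟨v, hv', hP⟩ h'

lemma aux_chain'_listEdge (l : List α) : l.Chain' (listEdge l) := by
  change List.IsChain _ _
  rw [List.isChain_iff_getElem]
  intro i h
  exact ⟨i, by rw [List.getElem?_eq_getElem (by omega)], by rw [List.getElem?_eq_getElem (by omega)]⟩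

lemma aux_acyclic_of_rank {E : α → α → Prop} (ρ : α → ℤ)
    (h : ∀ a b, E a b → ρ a < ρ b) : ∀ v, ¬ Relation.TransGen E v v := by
  have key : ∀ a b, Relation.TransGen E a b → ρ a < ρ b := by
    intro a b hab
    induction hab with
    | single h' => exact h _ _ h'
    | tail _ h' ih => exact ih.trans (h _ _ h')
  intro v hv
  exact absurd (key v v hv) (lt_irrefl _)

lemma aux_le_foldr_max (b : ℤ) : ∀ (l : List ℤ), ∀ a ∈ l, a ≤ l.foldr max b := by
  intro l
  induction l with
  | nil => simp
  | cons x t ih =>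
    intro a ha
    rcases List.mem_cons.1 ha with rfl | ha'
    · exact le_max_left _ _
    · exact le_trans (ih a ha') (le_max_right _ _)

end AuxLemmas

lemma aux_Yt_NC {V : Type} {Gs : V → V → Prop} {Xf : Set (FullVert V)} {Yt F : FullVert V}
    (hF : F ∈ NCset Gs Xf Yt) : Yt ∈ NCset Gs Xf Yt := by
  obtain ⟨⟨G', hG', w, vs, hproper, hchain, hw, hwXf, -⟩, hFXf⟩ := hF
  obtain ⟨hpath, hhead, ⟨b, hb, hlast⟩, hX0⟩ := hproper
  rw [Set.mem_singleton_iff] at hb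
  rw [hb] at hlast
  have hdesc : Desc G'.E w Yt := aux_reflTransGen_of_mem_chain' hchain hw hlast
  refine ⟨⟨G', hG', w, vs, ⟨hpath, hhead, ⟨Yt, rfl, hlast⟩, hX0⟩, hchain, hw, hwXf, hdesc⟩, ?_⟩
  intro hYtXf
  have hget : vs[vs.length - 1]? = some Yt := by
    rw [← aux_getLast?_eq_get?]; exact hlast
  have h0 : vs.length - 1 = 0 := hX0 _ _ hget hYtXf
  have hpos : 0 < vs.length := List.length_pos_iff.2 hpath.1
  have hlen1 : vs.length = 1 := by omega
  match vs, hlen1, hlast, hw with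
  | [c], _, hlast, hw =>
    simp only [List.getLast?_singleton, Option.some_inj] at hlast
    simp only [List.mem_singleton] at hw
    subst hlast; subst hw
    exact hwXf hYtXf

/-- assuming no candidate FTCG has a directed backdoor path from `Y_t` to an
intervention in `NC`, the existence of a fork collider-free backdoor path in some
candidate FTCG is equivalent to double NC-accessibility of some fork vertex. -/
theorem stmt6 {V : Type} [Fintype V] (Gs : V → V → Prop) (hGs : IsSCG Gs)
    (n : ℕ) (X : Fin n → V) (γ : Fin n → ℤ) (hγ : ∀ i, 0 ≤ γ i) (Y : V) (t : ℤ)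
    (Xf : Set (FullVert V)) (hXf : Xf = Set.range fun i => (X i, t - γ i))
    (hnb : ∀ (i : Fin n) (G : FTCG V), Candidate Gs G →
      ¬ DirPathWithin G.E (NCset Gs Xf (Y, t) ∪ {(X i, t - γ i)})
          (Y, t) (X i, t - γ i)) :
    (∃ (i : Fin n) (F : FullVert V) (G : FTCG V), Candidate Gs G ∧
        ∃ vs₁ vs₂ : List (FullVert V),
          IsDirPathFromTo G.E F (X i, t - γ i) vs₁ ∧
          IsDirPathFromTo G.E F (Y, t) vs₂ ∧
          2 ≤ vs₁.length ∧ 2 ≤ vs₂.length ∧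
          (∀ v ∈ vs₁, v ∈ NCset Gs Xf (Y, t) ∪ {(X i, t - γ i)}) ∧
          (∀ v ∈ vs₂, v ∈ NCset Gs Xf (Y, t) ∪ {(X i, t - γ i)}) ∧
          (∀ v, v ∈ vs₁ → v ∈ vs₂ → v = F)) ↔
    (∃ (i : Fin n) (F : FullVert V),
        NCAccessible Gs Xf (Y, t) (X i, t - γ i) F ∧
        NCAccessible Gs Xf (Y, t) (Y, t) F) := by
  classical
  constructor
  · rintro ⟨i, F, G, hG, vs₁, vs₂, ⟨⟨hne₁, hnd₁, hch₁⟩, hh₁, hl₁⟩,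
      ⟨⟨hne₂, hnd₂, hch₂⟩, hh₂, hl₂⟩, hlen₁, hlen₂, hm₁, hm₂, hcom⟩
    have hFX : F ≠ (X i, t - γ i) := aux_head_ne_last hnd₁ hlen₁ hh₁ hl₁
    have hFY : F ≠ (Y, t) := aux_head_ne_last hnd₂ hlen₂ hh₂ hl₂
    have hXimem : (X i, t - γ i) ∈ vs₁ := aux_mem_of_getLast? hl₁
    have hm₂' : ∀ v ∈ vs₂, v ∈ NCset Gs Xf (Y, t) := by
      intro v hv
      rcases hm₂ v hv with h | h
      · exact h
      · exfalso
        rw [Set.mem_singleton_iff] at h; subst h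
        exact hFX (hcom _ hXimem hv).symm
    refine ⟨i, F, ⟨hFX, G, hG, ?_⟩, ⟨hFY, G, hG, ?_⟩⟩
    · exact aux_transGen_of_chain' (aux_chain'_restrict hch₁ hm₁) hlen₁ hh₁ hl₁
    · exact aux_transGen_of_chain'
        (aux_chain'_restrict hch₂ (fun v hv => Or.inl (hm₂' v hv))) hlen₂ hh₂ hl₂
  · rintro ⟨i, F, ⟨hFX, G₁, hG₁, hp₁⟩, ⟨hFY, G₂, hG₂, hp₂⟩⟩
    haveI deqFV : DecidableEq (FullVert V) := Classical.decEq _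
    have hXiXf : (X i, t - γ i) ∈ Xf := by rw [hXf]; exact ⟨i, rfl⟩
    have hNCXf : ∀ v ∈ NCset Gs Xf (Y, t), v ∉ Xf := fun v hv => hv.2
    -- F is in NC
    have hFNC : F ∈ NCset Gs Xf (Y, t) := by
      rcases aux_first_mem hp₂ with h | h
      · exact h
      · rw [Set.mem_singleton_iff] at h; exact absurd h hFY
    have hYtNC : (Y, t) ∈ NCset Gs Xf (Y, t) := aux_Yt_NC hFNC
    have hYtXi : (Y, t) ≠ (X i, t - γ i) := fun h => hNCXf _ hYtNC (h ▸ hXiXf)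
    -- extract nodup directed path lists
    obtain ⟨L₁, hc₁, hnd₁, hh₁, hl₁, hlen₁⟩ := aux_exists_nodup_dirlist hp₁ hFX
    obtain ⟨L₂, hc₂, hnd₂, hh₂, hl₂, hlen₂⟩ := aux_exists_nodup_dirlist hp₂ hFY
    have memL₁ : ∀ v ∈ L₁, v ∈ NCset Gs Xf (Y, t) ∪ {(X i, t - γ i)} :=
      aux_mem_S_of_chain' (fun a b h => ⟨h.2.1, h.2.2⟩) hc₁ hlen₁
    have memL₂ : ∀ v ∈ L₂, v ∈ NCset Gs Xf (Y, t) := by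
      intro v hv
      rcases aux_mem_S_of_chain' (fun a b h => ⟨h.2.1, h.2.2⟩) hc₂ hlen₂ v hv with h | h
      · exact h
      · rw [Set.mem_singleton_iff] at h; rw [h]; exact hYtNC
    -- Y_t is not on L₁ (else hnb is violated)
    have hYtL₁ : (Y, t) ∉ L₁ := by
      intro hmem
      have hrt := aux_reflTransGen_of_mem_chain' hc₁ hmem hl₁
      rcases hrt.cases_head with h | ⟨c, hc, hrt'⟩
      · exact hYtXi h
      · exact hnb i G₁ hG₁ (Relation.TransGen.head' hc hrt')
    have hFL₁ : F ∈ L₁ := aux_mem_of_head? hh₁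
    have hFL₂ : F ∈ L₂ := aux_mem_of_head? hh₂
    -- last common vertex F' on L₂
    obtain ⟨F', tl, hsuf, hF'L₁, htl⟩ := aux_last_sat (· ∈ L₁) L₂ ⟨F, hFL₂, hFL₁⟩
    obtain ⟨pre, hpre⟩ := id hsuf
    have hvs₂nd : (F' :: tl).Nodup := List.Nodup.sublist hsuf.sublist hnd₂
    have hvs₂ch : (F' :: tl).Chain' _ := hc₂.suffix hsuf
    have hvs₂l : (F' :: tl).getLast? = some (Y, t) := by
      rw [← hpre, List.getLast?_append_of_ne_nil _ (by simp)] at hl₂; exact hl₂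
    have hF'Yt : F' ≠ (Y, t) := fun h => hYtL₁ (h ▸ hF'L₁)
    have htlne : tl ≠ [] := by
      rintro rfl
      simp only [List.getLast?_singleton, Option.some_inj] at hvs₂l
      exact hF'Yt hvs₂l
    have hF'NC : F' ∈ NCset Gs Xf (Y, t) := memL₂ _ (hsuf.subset (List.mem_cons_self))
    have hF'Xi : F' ≠ (X i, t - γ i) := fun h => hNCXf _ hF'NC (h ▸ hXiXf)
    -- suffix of L₁ from F'
    obtain ⟨p, q, hpq⟩ := List.append_of_mem hF'L₁
    have hsuf₁ : (F' :: q) <:+ L₁ := ⟨p, hpq.symm⟩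
    have hvs₁nd : (F' :: q).Nodup := List.Nodup.sublist hsuf₁.sublist hnd₁
    have hvs₁ch : (F' :: q).Chain' _ := hc₁.suffix hsuf₁
    have hvs₁l : (F' :: q).getLast? = some (X i, t - γ i) := by
      rw [hpq, List.getLast?_append_of_ne_nil _ (by simp)] at hl₁; exact hl₁
    have hqne : q ≠ [] := by
      rintro rfl
      simp only [List.getLast?_singleton, Option.some_inj] at hvs₁l
      exact hF'Xi hvs₁l
    have hsub₁ : ∀ v ∈ F' :: q, v ∈ L₁ := fun v hv => hsuf₁.subset hv
    have hcom : ∀ v, v ∈ F' :: q → v ∈ F' :: tl → v = F' := by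
      intro v hv₁ hv₂
      rcases List.mem_cons.1 hv₂ with h | h
      · exact h
      · exact absurd (hsub₁ v hv₁) (htl v h)
    have hm₁' : ∀ v ∈ F' :: q, v ∈ NCset Gs Xf (Y, t) ∪ {(X i, t - γ i)} :=
      fun v hv => memL₁ v (hsub₁ v hv)
    have hm₂' : ∀ v ∈ F' :: tl, v ∈ NCset Gs Xf (Y, t) := fun v hv => memL₂ v (hsuf.subset hv)
    set vs₁ : List (FullVert V) := F' :: q with hvs₁def
    set vs₂ : List (FullVert V) := F' :: tl with hvs₂def
    have hlenvs₁ : 2 ≤ vs₁.length := by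
      have := List.length_pos_iff.2 hqne
      simp only [hvs₁def, List.length_cons]; omega
    have hlenvs₂ : 2 ≤ vs₂.length := by
      have := List.length_pos_iff.2 htlne
      simp only [hvs₂def, List.length_cons]; omega
    -- fresh time horizon
    set T : ℤ := (((vs₁ ++ vs₂).map Prod.snd).foldr max 0) + 1 with hT
    have htime : ∀ v : FullVert V, (v ∈ vs₁ ∨ v ∈ vs₂) → v.2 < T := by
      intro v hv
      have h1 : v.2 ∈ (vs₁ ++ vs₂).map Prod.snd :=
        List.mem_map_of_mem (List.mem_append.2 hv)
      have h2 := aux_le_foldr_max 0 _ _ h1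
      omega
    -- the glued graph
    set E : FullVert V → FullVert V → Prop := fun u v =>
      listEdge vs₁ u v ∨ listEdge vs₂ u v ∨
        ∃ A B, Gs A B ∧ u = (A, T) ∧ v = (B, T + 1) with hE
    have hE₁ : ∀ u v, listEdge vs₁ u v → G₁.E u v ∧ True := by
      rintro u v ⟨j, hju, hjv⟩
      exact ⟨(aux_rel_of_listEdge hvs₁ch hju hjv).1, trivial⟩
    have hE₂ : ∀ u v, listEdge vs₂ u v → G₂.E u v ∧ True := by
      rintro u v ⟨j, hju, hjv⟩
      exact ⟨(aux_rel_of_listEdge hvs₂ch hju hjv).1, trivial⟩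
    -- rank function
    set L : ℤ := vs₁.length + vs₂.length with hLdef
    set idx : FullVert V → List (FullVert V) → ℕ :=
      fun a l => @List.idxOf _ (@instBEqOfDecidableEq _ deqFV) a l with hidxdef
    set ρ : FullVert V → ℤ := fun v =>
      if v ∈ vs₁ then (idx v vs₁ : ℤ)
      else if v ∈ vs₂ then (vs₁.length : ℤ) + idx v vs₂
      else L + 2 * (v.2 - T) with hρ
    have hidx₁ : ∀ (j : ℕ) (a : FullVert V), vs₁[j]? = some a →
        a ∈ vs₁ ∧ idx a vs₁ = j := by
      intro j a hj
      rw [List.getElem?_eq_some_iff] at hj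
      obtain ⟨h, rfl⟩ := hj
      refine ⟨List.getElem_mem _, ?_⟩
      simpa [hidxdef] using @List.Nodup.idxOf_getElem _ (@instBEqOfDecidableEq _ deqFV) _ _ hvs₁nd j h
    have hidx₂ : ∀ (j : ℕ) (a : FullVert V), vs₂[j]? = some a →
        a ∈ vs₂ ∧ idx a vs₂ = j := by
      intro j a hj
      rw [List.getElem?_eq_some_iff] at hj
      obtain ⟨h, rfl⟩ := hj
      refine ⟨List.getElem_mem _, ?_⟩
      simpa [hidxdef] using @List.Nodup.idxOf_getElem _ (@instBEqOfDecidableEq _ deqFV) _ _ hvs₂nd j h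
    have hmono : ∀ a b, E a b → ρ a < ρ b := by
      rintro a b (⟨j, hja, hjb⟩ | ⟨j, hja, hjb⟩ | ⟨A, B, hAB, rfl, rfl⟩)
      · obtain ⟨ha, hia⟩ := hidx₁ j a hja
        obtain ⟨hb, hib⟩ := hidx₁ (j+1) b hjb
        simp only [hρ, if_pos ha, if_pos hb, hia, hib]
        exact_mod_cast Nat.lt_succ_self j
      · obtain ⟨ha, hia⟩ := hidx₂ j a hja
        obtain ⟨hb, hib⟩ := hidx₂ (j+1) b hjb
        have hbv : b ∉ vs₁ := by
          intro hbv
          have hbF : b = F' := hcom b hbv hb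
          have h0 : idx F' vs₂ = 0 := (hidx₂ 0 F' rfl).2
          rw [hbF, h0] at hib
          omega
        by_cases hav : a ∈ vs₁
        · have ha' : a = F' := hcom a hav ha
          have h0 : idx a vs₁ = 0 := by
            rw [ha']; exact (hidx₁ 0 F' rfl).2
          simp only [hρ, if_pos hav, if_neg hbv, if_pos hb, h0, hib]
          push_cast
          omega
        · simp only [hρ, if_neg hav, if_neg hbv, if_pos ha, if_pos hb, hia, hib]
          push_cast
          omega
      · have haT1 : (A, T) ∉ vs₁ := fun h => absurd (htime _ (Or.inl h)) (by simp)
        have haT2 : (A, T) ∉ vs₂ := fun h => absurd (htime _ (Or.inr h)) (by simp)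
        have hbT1 : (B, T + 1) ∉ vs₁ := fun h => absurd (htime _ (Or.inl h)) (by simp)
        have hbT2 : (B, T + 1) ∉ vs₂ := fun h => absurd (htime _ (Or.inr h)) (by simp)
        simp only [hρ, if_neg haT1, if_neg haT2, if_neg hbT1, if_neg hbT2]
        omega
    have htr : ∀ a b : FullVert V, E a b → a.2 ≤ b.2 := by
      rintro a b (h | h | ⟨A, B, hAB, rfl, rfl⟩)
      · exact G₁.time_respecting _ _ (hE₁ _ _ h).1
      · exact G₂.time_respecting _ _ (hE₂ _ _ h).1
      · simp
    have hac : ∀ v, ¬ Relation.TransGen E v v := aux_acyclic_of_rank ρ hmono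
    have hcand : Candidate Gs ⟨E, htr, hac⟩ := by
      show reduction E = Gs
      funext A B
      apply propext
      constructor
      · rintro ⟨s, s', h⟩
        rcases h with h | h | ⟨A', B', hAB, h1, h2⟩
        · have h' := (hE₁ _ _ h).1
          rw [← hG₁]; exact ⟨s, s', h'⟩
        · have h' := (hE₂ _ _ h).1
          rw [← hG₂]; exact ⟨s, s', h'⟩
        · injection h1 with e1 e2
          injection h2 with e3 e4
          subst e1; subst e3
          exact hAB
      · intro h
        exact ⟨T, T + 1, Or.inr (Or.inr ⟨A, B, h, rfl, rfl⟩)⟩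
    refine ⟨i, F', ⟨E, htr, hac⟩, hcand, vs₁, vs₂,
      ⟨⟨by simp [hvs₁def], hvs₁nd, ?_⟩, rfl, hvs₁l⟩,
      ⟨⟨by simp [hvs₂def], hvs₂nd, ?_⟩, rfl, hvs₂l⟩,
      hlenvs₁, hlenvs₂, hm₁', fun v hv => Or.inl (hm₂' v hv), hcom⟩
    · exact (aux_chain'_listEdge vs₁).imp (fun a b h => Or.inl h)
    · exact (aux_chain'_listEdge vs₂).imp (fun a b h => Or.inr (Or.inl h))
end

section
/- Let G^s be an SCG with interventions X^f, let C be a child in G^s of some intervened time series with t_C < +∞, and let S be any time series. Then min { t₁ : S_{t₁} ∈ ∪_{G^f candidate} Desc(C_{t_C}, G^f) ∖ X^f } equals min { t₁ : t₁ ≥ t_C and S_{t₁} ∉ X^f } if S ∈ Desc(C, G^s), and equals +∞ otherwise. -/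
open Classical Relation

variable {α : Type*}

/-! ### Auxiliary lemmas for stmt10 -/

lemma toETime_mono {a b : ℤ} (h : a ≤ b) : toETime a ≤ toETime b := by
  simp only [toETime]; exact_mod_cast h

lemma toETime_injective {a b : ℤ} (h : toETime a = toETime b) : a = b := by
  simp only [toETime] at h; exact_mod_cast h

lemma toETime_ne_top (a : ℤ) : toETime a ≠ ⊤ := by simp [toETime]

/-- Chains of a given length, with the last edge exposed. -/
def chainLen {β : Type*} (r : β → β → Prop) : ℕ → β → β → Prop
  | 0, a, b => b = a
  | (m+1), a, b => ∃ c, chainLen r m a c ∧ r c b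

lemma reflTransGen_iff_chainLen {β : Type*} {r : β → β → Prop} {a b : β} :
    Relation.ReflTransGen r a b ↔ ∃ m, chainLen r m a b := by
  constructor
  · intro h
    induction h with
    | refl => exact ⟨0, rfl⟩
    | tail _ hr ih => obtain ⟨m, hm⟩ := ih; exact ⟨m+1, _, hm, hr⟩
  · rintro ⟨m, hm⟩
    induction m generalizing b with
    | zero => simp only [chainLen] at hm; subst hm; exact Relation.ReflTransGen.refl
    | succ m ih =>
        obtain ⟨c, hc, hr⟩ := hm
        exact (ih hc).tail hr

/-- A candidate FTCG built from an SCG and a rank function: every SCG edge can be realized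
with any lag `≥ 1`, and with lag `0` whenever the rank strictly increases. -/
def mkFTCG {V : Type} (Gs : V → V → Prop) (d : V → ℕ) : FTCG V where
  E a b := Gs a.1 b.1 ∧ (a.2 + 1 ≤ b.2 ∨ (b.2 = a.2 ∧ d a.1 < d b.1))
  time_respecting := by
    rintro ⟨a, s⟩ ⟨b, s'⟩ ⟨-, h | ⟨h, -⟩⟩ <;> omega
  acyclic := by
    intro v hv
    have key : ∀ p q : FullVert V,
        Relation.TransGen (fun a b : FullVert V =>
          Gs a.1 b.1 ∧ (a.2 + 1 ≤ b.2 ∨ (b.2 = a.2 ∧ d a.1 < d b.1))) p q →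
        p.2 < q.2 ∨ (p.2 = q.2 ∧ d p.1 < d q.1) := by
      intro p q h
      induction h with
      | single h =>
          rcases h.2 with h' | ⟨h1, h2⟩
          · exact Or.inl (by omega)
          · exact Or.inr ⟨h1.symm, h2⟩
      | tail _ h ih =>
          rcases h.2 with h' | ⟨h1, h2⟩
          · rcases ih with h'' | ⟨h'', -⟩ <;> exact Or.inl (by omega)
          · rcases ih with h'' | ⟨h'', h3⟩
            · exact Or.inl (by omega)
            · exact Or.inr ⟨by omega, Nat.lt_trans h3 h2⟩
    rcases key v v hv with h | ⟨-, h⟩ <;> omega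

lemma mkFTCG_candidate {V : Type} (Gs : V → V → Prop) (d : V → ℕ) :
    Candidate Gs (mkFTCG Gs d) := by
  funext A B
  apply propext
  constructor
  · rintro ⟨s, s', h, -⟩; exact h
  · intro h; exact ⟨0, 1, h, Or.inl (by norm_num)⟩

lemma desc_time_le {V : Type} (G : FTCG V) {p q : FullVert V} (h : Desc G.E p q) :
    p.2 ≤ q.2 := by
  induction h with
  | refl => exact le_rfl
  | tail _ e ih => exact ih.trans (G.time_respecting _ _ e)

lemma desc_project {V : Type} {Gs : V → V → Prop} {G : FTCG V} (hG : Candidate Gs G)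
    {p q : FullVert V} (h : Desc G.E p q) : Relation.ReflTransGen Gs p.1 q.1 := by
  induction h with
  | refl => exact Relation.ReflTransGen.refl
  | tail _ e ih => exact ih.tail (by rw [← hG]; exact ⟨_, _, e⟩)

/-- Key construction: given reachability in the SCG, there is a single candidate FTCG in which
`(C, tc)` has `(S, t₁)` as a descendant, for any `t₁ ≥ tc` (with `t₁ = tc` forced if `S = C`). -/
lemma exists_candidate_desc {V : Type} (Gs : V → V → Prop) (C : V) (tc : ℤ) :
    ∃ G : FTCG V, Candidate Gs G ∧
      ∀ S t₁, Relation.ReflTransGen Gs C S → tc ≤ t₁ → (S ≠ C ∨ t₁ = tc) →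
        Desc G.E (C, tc) (S, t₁) := by
  classical
  set d : V → ℕ := fun b => if h : ∃ m, chainLen Gs m C b then Nat.find h else 0 with hd
  refine ⟨mkFTCG Gs d, mkFTCG_candidate Gs d, ?_⟩
  have hdspec : ∀ b, (∃ m, chainLen Gs m C b) → chainLen Gs (d b) C b := by
    intro b h
    rw [hd]; simp only [dif_pos h]; exact Nat.find_spec h
  have hdle : ∀ b, (∃ m, chainLen Gs m C b) → ∀ m, chainLen Gs m C b → d b ≤ m := by
    intro b h m hm
    rw [hd]; simp only [dif_pos h]; exact Nat.find_le hm
  have claim1 : ∀ N b, (∃ m, chainLen Gs m C b) → d b ≤ N →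
      Desc (mkFTCG Gs d).E (C, tc) (b, tc) := by
    intro N
    induction N with
    | zero =>
        intro b h hle
        have h0 := hdspec b h
        rw [Nat.le_zero.mp hle] at h0
        simp only [chainLen] at h0
        subst h0
        exact Relation.ReflTransGen.refl
    | succ N ih =>
        intro b h hle
        have hs := hdspec b h
        cases hdb : d b with
        | zero =>
            rw [hdb] at hs; simp only [chainLen] at hs; subst hs
            exact Relation.ReflTransGen.refl
        | succ m =>
            rw [hdb] at hs
            obtain ⟨c, hc, hcb⟩ := hs
            have hr : ∃ m, chainLen Gs m C c := ⟨m, hc⟩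
            have hdc : d c ≤ m := hdle c hr m hc
            have hdes : Desc (mkFTCG Gs d).E (C, tc) (c, tc) := ih c hr (by omega)
            have hlt : d c < d b := by omega
            exact hdes.tail ⟨hcb, Or.inr ⟨rfl, hlt⟩⟩
  intro S t₁ hCS htle hne
  have hreach : ∃ m, chainLen Gs m C S := reflTransGen_iff_chainLen.mp hCS
  rcases eq_or_lt_of_le htle with heq | hlt
  · subst heq
    exact claim1 (d S) S hreach le_rfl
  · have hSC : S ≠ C := by
      rcases hne with h | h
      · exact h
      · omega
    have hs := hdspec S hreach
    cases hdS : d S with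
    | zero =>
        rw [hdS] at hs; simp only [chainLen] at hs
        exact absurd hs hSC
    | succ m =>
        rw [hdS] at hs
        obtain ⟨c, hc, hcb⟩ := hs
        have hdes := claim1 (d c) c ⟨m, hc⟩ le_rfl
        have hlag : tc + 1 ≤ t₁ := by omega
        exact hdes.tail ⟨hcb, Or.inl hlag⟩


/-- first time at which a time series `S` enters the union over candidate
FTCGs of the descendants of `C_{t_C}` (outside the interventions). -/
theorem stmt10 {V : Type} [Fintype V] (Gs : V → V → Prop) (hGs : IsSCG Gs)
    (n : ℕ) (X : Fin n → V) (γ : Fin n → ℤ) (hγ : ∀ i, 0 ≤ γ i) (Y : V) (t : ℤ)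
    (Xf : Set (FullVert V)) (hXf : Xf = Set.range fun i => (X i, t - γ i))
    (C : V) (hC : ∃ i : Fin n, Gs (X i) C)
    (tc : ℤ)
    (htc : toETime tc = sInf { s : ETime | ∃ t₁ : ℤ, s = toETime t₁ ∧
        (C, t₁) ∉ Xf ∧ ∃ (i : Fin n) (G : FTCG V), Candidate Gs G ∧
          G.E (X i, t - γ i) (C, t₁) ∧ AncAvoid G.E Xf (C, t₁) (Y, t) })
    (S : V) :
    (Relation.ReflTransGen Gs C S →
      sInf { s : ETime | ∃ t₁ : ℤ, s = toETime t₁ ∧ (S, t₁) ∉ Xf ∧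
          ∃ G : FTCG V, Candidate Gs G ∧ Desc G.E (C, tc) (S, t₁) }
        = sInf { s : ETime | ∃ t₁ : ℤ, s = toETime t₁ ∧ tc ≤ t₁ ∧ (S, t₁) ∉ Xf }) ∧
    (¬ Relation.ReflTransGen Gs C S →
      sInf { s : ETime | ∃ t₁ : ℤ, s = toETime t₁ ∧ (S, t₁) ∉ Xf ∧
          ∃ G : FTCG V, Candidate Gs G ∧ Desc G.E (C, tc) (S, t₁) }
        = ⊤) := by
  classical
  -- `(C, tc)` is not in `Xf`: the infimum defining `tc` is attained.
  have hCtc : (C, tc) ∉ Xf ∧ ∃ (i : Fin n) (G : FTCG V), Candidate Gs G ∧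
      G.E (X i, t - γ i) (C, tc) ∧ AncAvoid G.E Xf (C, tc) (Y, t) := by
    set P : ℤ → Prop := fun t₁ => (C, t₁) ∉ Xf ∧ ∃ (i : Fin n) (G : FTCG V),
      Candidate Gs G ∧ G.E (X i, t - γ i) (C, t₁) ∧ AncAvoid G.E Xf (C, t₁) (Y, t) with hP
    have hne0 : ∃ t₁ : ℤ, P t₁ := by
      by_contra h
      push_neg at h
      have hempty : { s : ETime | ∃ t₁ : ℤ, s = toETime t₁ ∧ P t₁ } = ∅ := by
        ext s
        simp only [Set.mem_empty_iff_false, iff_false, Set.mem_setOf_eq]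
        rintro ⟨t₁, rfl, hp⟩
        exact h t₁ hp
      rw [hempty, sInf_empty] at htc
      exact toETime_ne_top tc htc
    have hbdd : ∃ b : ℤ, ∀ z : ℤ, P z → b ≤ z := by
      refine ⟨t - ((Finset.univ.sup fun i => (γ i).toNat : ℕ) : ℤ), ?_⟩
      intro z hz
      obtain ⟨-, i, G, -, hedge, -⟩ := hz
      have h1 : t - γ i ≤ z := G.time_respecting _ _ hedge
      have h2 : (γ i).toNat ≤ (Finset.univ.sup fun i => (γ i).toNat) :=
        Finset.le_sup (f := fun i => (γ i).toNat) (Finset.mem_univ i)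
      have h3 : γ i = ((γ i).toNat : ℤ) := (Int.toNat_of_nonneg (hγ i)).symm
      omega
    obtain ⟨lb, hlb, hleast⟩ := Int.exists_least_of_bdd hbdd hne0
    have hsinf : sInf { s : ETime | ∃ t₁ : ℤ, s = toETime t₁ ∧ P t₁ } = toETime lb := by
      refine le_antisymm (sInf_le ⟨lb, rfl, hlb⟩) (le_sInf ?_)
      rintro s ⟨t₁, rfl, hp⟩
      exact toETime_mono (hleast t₁ hp)
    rw [hsinf] at htc
    have : tc = lb := toETime_injective htc
    rw [this]
    exact hlb
  -- the candidate descendant set is contained in the "time window" set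
  have hsub : { s : ETime | ∃ t₁ : ℤ, s = toETime t₁ ∧ (S, t₁) ∉ Xf ∧
        ∃ G : FTCG V, Candidate Gs G ∧ Desc G.E (C, tc) (S, t₁) }
      ⊆ { s : ETime | ∃ t₁ : ℤ, s = toETime t₁ ∧ tc ≤ t₁ ∧ (S, t₁) ∉ Xf } := by
    rintro s ⟨t₁, rfl, hx, G, hG, hdesc⟩
    exact ⟨t₁, rfl, desc_time_le G hdesc, hx⟩
  constructor
  · -- `S` is a descendant of `C` in the SCG
    intro hCS
    set T : ℤ → Prop := fun t₁ => tc ≤ t₁ ∧ (S, t₁) ∉ Xf with hT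
    have hTne : ∃ t₁ : ℤ, T t₁ := by
      refine ⟨max tc (t + 1), le_max_left _ _, ?_⟩
      rw [hXf]
      rintro ⟨i, hi⟩
      have h1 : t - γ i = max tc (t + 1) := congrArg Prod.snd hi
      have h2 : t + 1 ≤ max tc (t + 1) := le_max_right _ _
      have h3 := hγ i
      omega
    have hTbdd : ∃ b : ℤ, ∀ z : ℤ, T z → b ≤ z := ⟨tc, fun z hz => hz.1⟩
    obtain ⟨m, hm, hmle⟩ := Int.exists_least_of_bdd hTbdd hTne
    have hsinfB : sInf { s : ETime | ∃ t₁ : ℤ, s = toETime t₁ ∧ tc ≤ t₁ ∧ (S, t₁) ∉ Xf }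
        = toETime m := by
      refine le_antisymm (sInf_le ⟨m, rfl, hm⟩) (le_sInf ?_)
      rintro s ⟨t₁, rfl, h1, h2⟩
      exact toETime_mono (hmle t₁ ⟨h1, h2⟩)
    have hmemA : toETime m ∈ { s : ETime | ∃ t₁ : ℤ, s = toETime t₁ ∧ (S, t₁) ∉ Xf ∧
        ∃ G : FTCG V, Candidate Gs G ∧ Desc G.E (C, tc) (S, t₁) } := by
      obtain ⟨G, hG, hGdesc⟩ := exists_candidate_desc Gs C tc
      refine ⟨m, rfl, hm.2, G, hG, hGdesc S m hCS hm.1 ?_⟩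
      by_cases hSC : S = C
      · right
        subst hSC
        have htcT : T tc := ⟨le_rfl, hCtc.1⟩
        exact le_antisymm (hmle tc htcT) hm.1
      · exact Or.inl hSC
    refine le_antisymm ?_ (sInf_le_sInf hsub)
    rw [hsinfB]
    exact sInf_le hmemA
  · -- `S` is not a descendant of `C` in the SCG: the set is empty
    intro hns
    have hempty : { s : ETime | ∃ t₁ : ℤ, s = toETime t₁ ∧ (S, t₁) ∉ Xf ∧
        ∃ G : FTCG V, Candidate Gs G ∧ Desc G.E (C, tc) (S, t₁) } = ∅ := by
      ext s
      simp only [Set.mem_empty_iff_false, iff_false, Set.mem_setOf_eq]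
      rintro ⟨t₁, rfl, hx, G, hG, hdesc⟩
      exact hns (desc_project hG hdesc)
    rw [hempty, sInf_empty]
end

section
/- Let G^s be an SCG with interventions X^f, C a child in G^s of some intervened time series with t_C = t−γ_i for a unique intervention X^i (i.e., X^i is the only intervened parent of C in G^s with intervention time ≤ t_C), and S a time series. Then min { t₁ : S_{t₁} ∈ ∪_{G^f candidate} Desc(C_{t_C}, G^f ∖ {X^i_{t−γ_i}}) ∖ X^f } equals: min { t₁ ≥ t_C : S_{t₁} ∉ X^f } if S is a descendant of C in G^s ∖ {X^i}; otherwise min { t₁ ≥ t_C + 1 : S_{t₁} ∉ X^f } if S is a descendant of C in G^s; otherwise +∞. -/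
open Classical Relation

variable {α : Type*}

/-! ### Auxiliary lemmas for stmt11 -/

lemma st11_toETime_le_iff {a b : ℤ} : toETime a ≤ toETime b ↔ a ≤ b := by
  simp [toETime]

lemma st11_toETime_inj {a b : ℤ} : toETime a = toETime b ↔ a = b := by
  simp [toETime]

lemma st11_toETime_ne_top (n : ℤ) : toETime n ≠ ⊤ := by
  simp [toETime]

lemma st11_etime_sInf_eq {P : ℤ → Prop} {tc : ℤ}
    (h : sInf {s : ETime | ∃ n, s = toETime n ∧ P n} = toETime tc) :
    P tc ∧ ∀ n, P n → tc ≤ n := by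
  have hlb : ∀ n, P n → tc ≤ n := by
    intro n hn
    have : sInf {s : ETime | ∃ n, s = toETime n ∧ P n} ≤ toETime n :=
      sInf_le ⟨n, rfl, hn⟩
    rw [h] at this; exact st11_toETime_le_iff.1 this
  have hne : ∃ n, P n := by
    by_contra hc
    push_neg at hc
    have : {s : ETime | ∃ n, s = toETime n ∧ P n} = ∅ := by
      ext s; simp only [Set.mem_setOf_eq, Set.mem_empty_iff_false, iff_false]
      rintro ⟨n, _, hn⟩; exact hc n hn
    rw [this, sInf_empty] at h
    exact st11_toETime_ne_top tc h.symm
  obtain ⟨m, hm, hmin⟩ := Int.exists_least_of_bdd ⟨tc, hlb⟩ hne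
  have : toETime m = toETime tc := by
    apply le_antisymm
    · rw [← h]; exact le_sInf (by rintro s ⟨n, rfl, hn⟩; exact st11_toETime_le_iff.2 (hmin n hn))
    · rw [← h]; exact sInf_le ⟨m, rfl, hm⟩
  rw [st11_toETime_inj] at this; subst this
  exact ⟨hm, hlb⟩

lemma st11_exists_nodup_chain [DecidableEq α] (r : α → α → Prop) {a b : α}
    (h : Relation.ReflTransGen r a b) :
    ∃ l : List α, List.Chain' r l ∧ l.Nodup ∧ l.head? = some a ∧ l.getLast? = some b := by
  induction h with
  | refl => exact ⟨[a], List.isChain_singleton a, List.nodup_singleton a, rfl, rfl⟩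
  | @tail c d hac hcd ih =>
    obtain ⟨l, hch, hnd, hhd, hlast⟩ := ih
    by_cases hd : d ∈ l
    · refine ⟨l.take (l.idxOf d + 1), hch.take _, hnd.sublist (List.take_sublist _ _), ?_, ?_⟩
      · obtain ⟨x, l', rfl⟩ : ∃ x l', l = x :: l' := by
          cases l with
          | nil => simp at hhd
          | cons x l' => exact ⟨x, l', rfl⟩
        simpa using hhd
      · have hlt : l.idxOf d < l.length := List.idxOf_lt_length_iff.2 hd
        rw [List.take_succ]
        have : l[l.idxOf d]? = some d := by
          rw [List.getElem?_eq_getElem hlt]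
          simp [List.getElem_idxOf]
        rw [this]
        simp [List.getLast?_concat]
    · refine ⟨l ++ [d], ?_, ?_, ?_, by simp⟩
      · show List.IsChain r (l ++ [d])
        rw [List.isChain_append]
        refine ⟨hch, List.isChain_singleton d, ?_⟩
        intro x hx y hy
        rw [hlast] at hx
        simp at hx hy
        subst hx; subst hy; exact hcd
      · simp [List.nodup_append, hd, hnd]
        intro a ha h; exact hd (h ▸ ha)
      · cases l with
        | nil => simp at hhd
        | cons x l' => simpa using hhd

lemma st11_rtg_of_chain' (r : α → α → Prop) {l : List α} {a b : α}
    (hch : List.Chain' r l) (hhd : l.head? = some a) (hlast : l.getLast? = some b) :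
    Relation.ReflTransGen r a b := by
  cases l with
  | nil => simp at hhd
  | cons x l' =>
    have hxa : x = a := by simpa using hhd
    subst hxa
    have hc : List.IsChain r (x :: l') := hch
    have hb : (x :: l').getLast (List.cons_ne_nil _ _) = b := by
      rw [List.getLast?_eq_getLast (List.cons_ne_nil _ _)] at hlast
      exact Option.some_injective _ hlast
    exact List.relationReflTransGen_of_exists_isChain_cons l' hc hb

/-- Auxiliary FTCG: edges over `Gs` pairs that increase `(time, ord)` lexicographically. -/
def st11_pathG {V : Type} (Gs : V → V → Prop) (ord : V → ℕ) : FTCG V where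
  E := fun x y => Gs x.1 y.1 ∧ (x.2 < y.2 ∨ (x.2 = y.2 ∧ ord x.1 < ord y.1))
  time_respecting := fun a b h => h.2.elim le_of_lt (fun h' => le_of_eq h'.1)
  acyclic := by
    intro v hv
    have key : ∀ a b : FullVert V, Relation.TransGen
        (fun x y => Gs x.1 y.1 ∧ (x.2 < y.2 ∨ (x.2 = y.2 ∧ ord x.1 < ord y.1))) a b →
        (a.2 < b.2 ∨ (a.2 = b.2 ∧ ord a.1 < ord b.1)) := by
      intro a b h
      induction h with
      | single h => exact h.2
      | tail _ h ih =>
        rcases ih with h1 | ⟨h1, h2⟩ <;> rcases h.2 with h3 | ⟨h3, h4⟩ <;>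
          [exact Or.inl (by omega); exact Or.inl (by omega); exact Or.inl (by omega);
           exact Or.inr ⟨by omega, by omega⟩]
    rcases key v v hv with h | ⟨_, h⟩ <;> omega

lemma st11_pathG_candidate {V : Type} (Gs : V → V → Prop) (ord : V → ℕ) :
    Candidate Gs (st11_pathG Gs ord) := by
  funext A B
  apply propext
  constructor
  · rintro ⟨s, s', h, _⟩; exact h
  · intro h; exact ⟨0, 1, h, Or.inl one_pos⟩

lemma st11_head?_eq_getElem_zero {l : List α} (h : 0 < l.length) :
    l.head? = some (l[0]) := by
  cases l with
  | nil => simp at h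
  | cons x t => rfl

lemma st11_getLast?_eq_getElem {l : List α} (h : 0 < l.length) :
    l.getLast? = some (l[l.length - 1]'(by omega)) := by
  rw [List.getLast?_eq_getLast_of_ne_nil (by intro hc; subst hc; simp at h),
    List.getLast_eq_getElem]

/-- CORE: realize an SCG path as an FTCG directed path from `(C,tc)` to `(S,m)`
avoiding the single vertex `(Xi, tc)`. -/
lemma st11_core {V : Type} (Gs : V → V → Prop) (Xi : V) (tc m : ℤ)
    (vs : List V) (hch : vs.Chain' Gs) (hnd : vs.Nodup) (hlen : 2 ≤ vs.length)
    {C S : V} (hhd : vs.head? = some C) (hlast : vs.getLast? = some S)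
    (hCX : C ≠ Xi) (htcm : tc ≤ m) (hXi : Xi ∈ vs → tc + 1 ≤ m) :
    ∃ G : FTCG V, Candidate Gs G ∧
      AncAvoid G.E {(Xi, tc)} (C, tc) (S, m) := by
  classical
  set k := vs.length - 1 with hk
  set p := vs.idxOf Xi with hp
  set τ : ℕ → ℤ := fun j => if j = k then m else if j < p then tc else tc + 1 with hτ
  have hplen : Xi ∈ vs → p < vs.length := fun h => List.idxOf_lt_length_iff.2 h
  have hgetp : ∀ j (hj : j < vs.length), vs[j] = Xi → j = p := by
    intro j hj hXij
    have := List.Nodup.idxOf_getElem hnd j hj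
    rw [hXij] at this; omega
  have havoid : ∀ j, (hj : j < vs.length) →
      ((vs[j], τ j) : FullVert V) ∉ ({(Xi, tc)} : Set (FullVert V)) := by
    intro j hj hmem
    simp only [Set.mem_singleton_iff, Prod.mk.injEq] at hmem
    obtain ⟨hXij, hτj⟩ := hmem
    have hjp : j = p := hgetp j hj hXij
    have hmem' : Xi ∈ vs := hXij ▸ List.getElem_mem hj
    have hm1 : tc + 1 ≤ m := hXi hmem'
    by_cases hjk : j = k
    · simp only [hτ, hjk, if_pos rfl] at hτj; omega
    · have : ¬ (j < p) := by omega
      simp only [hτ, if_neg hjk, if_neg this] at hτj; omega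
  have hstep : ∀ i, i + 1 ≤ k → τ i ≤ τ (i+1) := by
    intro i hik
    have hik' : i ≠ k := by omega
    by_cases h1 : i + 1 = k
    · have hτi1 : τ (i+1) = m := by simp [hτ, h1]
      by_cases h2 : i < p
      · simp [hτ, hik', h2, hτi1]; omega
      · have hpm : Xi ∈ vs := by
          apply List.idxOf_lt_length_iff.1
          have : p ≤ i := by omega
          have : k < vs.length := by omega
          omega
        have := hXi hpm
        simp [hτ, hik', h2, hτi1]; omega
    · by_cases h2 : i < p
      · simp only [hτ, if_neg hik', if_pos h2, if_neg h1]
        split <;> omega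
      · have h3 : ¬ (i + 1 < p) := by omega
        simp [hτ, hik', h1, h2, h3]
  set ord : V → ℕ := fun v => vs.idxOf v with hord
  refine ⟨st11_pathG Gs ord, st11_pathG_candidate Gs ord, ?_⟩
  set Av : Set (FullVert V) := {(Xi, tc)} with hAv
  set R : FullVert V → FullVert V → Prop :=
    fun x y => (st11_pathG Gs ord).E x y ∧ x ∉ Av ∧ y ∉ Av with hR
  have hklen : k + 1 = vs.length := by omega
  set f : Fin vs.length → FullVert V := fun j => (vs[(j : ℕ)], τ j) with hf
  set ws : List (FullVert V) := List.ofFn f with hws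
  have hlenws : ws.length = vs.length := by simp [hws]
  have hwsget : ∀ j (hj : j < ws.length), ws[j] = (vs[j]'(by omega), τ j) := by
    intro j hj
    simp [hws, List.getElem_ofFn, hf]
  have hchain : ws.Chain' R := by
    show List.IsChain R ws
    rw [List.isChain_iff_getElem]
    intro i hi
    rw [hwsget i (by omega), hwsget (i+1) (by omega)]
    have hik : i + 1 ≤ k := by omega
    have hGs : Gs (vs[i]'(by omega)) (vs[i+1]'(by omega)) := by
      have := List.isChain_iff_getElem.1 hch i (by omega)
      simpa using this
    refine ⟨⟨hGs, ?_⟩, havoid i (by omega), havoid (i+1) (by omega)⟩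
    rcases lt_or_eq_of_le (hstep i hik) with h | h
    · exact Or.inl h
    · refine Or.inr ⟨h, ?_⟩
      simp only [hord]
      rw [List.Nodup.idxOf_getElem hnd i (by omega), List.Nodup.idxOf_getElem hnd (i+1) (by omega)]
      omega
  have hhd' : ws.head? = some (C, tc) := by
    rw [st11_head?_eq_getElem_zero (by omega), hwsget 0 (by omega)]
    have hC : vs[0] = C := by
      rw [st11_head?_eq_getElem_zero (by omega)] at hhd
      exact Option.some_injective _ hhd
    have hp0 : 0 < p := by
      rcases Nat.eq_zero_or_pos p with h0 | h0
      · exfalso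
        have hplt : p < vs.length := by omega
        have hii := List.getElem_idxOf (x := Xi) (xs := vs)
          (show List.idxOf Xi vs < vs.length by omega)
        simp only [show List.idxOf Xi vs = 0 from by omega] at hii
        exact hCX (by rw [← hC]; exact hii.symm ▸ rfl)
      · exact h0
    have hτ0 : τ 0 = tc := by
      have h0k : (0:ℕ) ≠ k := by omega
      simp [hτ, h0k, hp0]
    rw [hC, hτ0]
  have hlast' : ws.getLast? = some (S, m) := by
    rw [st11_getLast?_eq_getElem (l := ws) (by omega)]
    rw [hwsget (ws.length - 1) (by omega)]
    have hS : vs[vs.length - 1]'(by omega) = S := by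
      rw [st11_getLast?_eq_getElem (by omega : 0 < vs.length)] at hlast
      exact Option.some_injective _ hlast
    have hτk : τ (ws.length - 1) = m := by
      have : ws.length - 1 = k := by omega
      simp [hτ, this]
    simp only [hlenws]
    rw [hS]
    have : τ (vs.length - 1) = m := by rw [← hlenws]; exact hτk
    rw [this]
  exact st11_rtg_of_chain' R hchain hhd' hlast'

lemma st11_rtg_time_le {V : Type} (G : FTCG V) {R : FullVert V → FullVert V → Prop}
    (hR : ∀ a b, R a b → G.E a b) {a b : FullVert V}
    (h : Relation.ReflTransGen R a b) : a.2 ≤ b.2 := by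
  induction h with
  | refl => exact le_refl _
  | tail _ h2 ih => exact ih.trans (G.time_respecting _ _ (hR _ _ h2))

lemma st11_rtg_proj {V : Type} {Gs : V → V → Prop} {G : FTCG V} (hG : Candidate Gs G)
    {R : FullVert V → FullVert V → Prop} (hR : ∀ a b, R a b → G.E a b)
    {a b : FullVert V} (h : Relation.ReflTransGen R a b) :
    Relation.ReflTransGen Gs a.1 b.1 := by
  induction h with
  | refl => exact Relation.ReflTransGen.refl
  | tail _ h2 ih =>
    refine ih.tail ?_
    rw [← hG]
    exact ⟨_, _, hR _ _ h2⟩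

lemma st11_proj_avoid {V : Type} {Gs : V → V → Prop} {G : FTCG V} (hG : Candidate Gs G)
    (Xi : V) (tc : ℤ) {C : V} {b : FullVert V}
    (h : AncAvoid G.E {(Xi, tc)} (C, tc) b) (hb : b.2 ≤ tc) :
    Relation.ReflTransGen (fun A B => Gs A B ∧ A ≠ Xi ∧ B ≠ Xi) C b.1 := by
  induction h with
  | refl => exact Relation.ReflTransGen.refl
  | @tail c b' h1 h2 ih =>
    have hcb : c.2 ≤ b'.2 := G.time_respecting _ _ h2.1
    have htcc : tc ≤ c.2 := st11_rtg_time_le G (fun _ _ h => h.1) h1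
    have hc2 : c.2 = tc := le_antisymm (hcb.trans hb) htcc
    have hb2 : b'.2 = tc := le_antisymm hb (htcc.trans hcb)
    refine (ih (by omega)).tail ⟨?_, ?_, ?_⟩
    · rw [← hG]; exact ⟨_, _, h2.1⟩
    · intro hc1
      exact h2.2.1 (by simp only [Set.mem_singleton_iff]; exact Prod.ext hc1 hc2)
    · intro hb1
      exact h2.2.2 (by simp only [Set.mem_singleton_iff]; exact Prod.ext hb1 hb2)

lemma st11_chain_mem {q : α → α → Prop} {P : α → Prop} {vs : List α}
    (hch : vs.Chain' q) {C : α} (hhd : vs.head? = some C)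
    (hq : ∀ a b, q a b → P b) (hC : P C) : ∀ x ∈ vs, P x := by
  intro x hx
  obtain ⟨j, hj, rfl⟩ := List.mem_iff_getElem.1 hx
  cases j with
  | zero =>
    rw [st11_head?_eq_getElem_zero (by omega)] at hhd
    rw [Option.some_injective _ hhd]; exact hC
  | succ i =>
    have := List.isChain_iff_getElem.1 hch i (by omega)
    exact hq _ _ this

/-- variant of Statement 10 with the unique same-time intervened parent
`X^{i₀}_{t−γ_{i₀}}` deleted from the graphs. -/
theorem stmt11 {V : Type} [Fintype V] (Gs : V → V → Prop) (hGs : IsSCG Gs)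
    (n : ℕ) (X : Fin n → V) (γ : Fin n → ℤ) (hγ : ∀ i, 0 ≤ γ i) (Y : V) (t : ℤ)
    (Xf : Set (FullVert V)) (hXf : Xf = Set.range fun i => (X i, t - γ i))
    (C : V) (tc : ℤ)
    (htc : toETime tc = sInf { s : ETime | ∃ t₁ : ℤ, s = toETime t₁ ∧
        (C, t₁) ∉ Xf ∧ ∃ (i : Fin n) (G : FTCG V), Candidate Gs G ∧
          G.E (X i, t - γ i) (C, t₁) ∧ AncAvoid G.E Xf (C, t₁) (Y, t) })
    (i₀ : Fin n) (hpar : Gs (X i₀) C) (htime₀ : t - γ i₀ = tc)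
    (huniq : ∀ j : Fin n, Gs (X j) C → t - γ j ≤ tc →
      (X j, t - γ j) = (X i₀, t - γ i₀)) (S : V) :
    (Relation.ReflTransGen (fun A B => Gs A B ∧ A ≠ X i₀ ∧ B ≠ X i₀) C S →
      sInf { s : ETime | ∃ t₁ : ℤ, s = toETime t₁ ∧ (S, t₁) ∉ Xf ∧
          ∃ G : FTCG V, Candidate Gs G ∧
            AncAvoid G.E {(X i₀, t - γ i₀)} (C, tc) (S, t₁) }
        = sInf { s : ETime | ∃ t₁ : ℤ, s = toETime t₁ ∧ tc ≤ t₁ ∧ (S, t₁) ∉ Xf }) ∧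
    (¬ Relation.ReflTransGen (fun A B => Gs A B ∧ A ≠ X i₀ ∧ B ≠ X i₀) C S →
      Relation.ReflTransGen Gs C S →
      sInf { s : ETime | ∃ t₁ : ℤ, s = toETime t₁ ∧ (S, t₁) ∉ Xf ∧
          ∃ G : FTCG V, Candidate Gs G ∧
            AncAvoid G.E {(X i₀, t - γ i₀)} (C, tc) (S, t₁) }
        = sInf { s : ETime | ∃ t₁ : ℤ, s = toETime t₁ ∧ tc + 1 ≤ t₁ ∧ (S, t₁) ∉ Xf }) ∧
    (¬ Relation.ReflTransGen Gs C S →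
      sInf { s : ETime | ∃ t₁ : ℤ, s = toETime t₁ ∧ (S, t₁) ∉ Xf ∧
          ∃ G : FTCG V, Candidate Gs G ∧
            AncAvoid G.E {(X i₀, t - γ i₀)} (C, tc) (S, t₁) }
        = ⊤) := by
  classical
  rw [htime₀]
  obtain ⟨hCtc_nXf, -⟩ := (st11_etime_sInf_eq htc.symm).1
  have hCXi : C ≠ X i₀ := by
    intro h
    apply hCtc_nXf
    rw [hXf]
    exact ⟨i₀, by show (X i₀, t - γ i₀) = (C, tc); rw [htime₀, h]⟩
  have hBne : ∀ c : ℤ, ∃ t₁, c ≤ t₁ ∧ (S, t₁) ∉ Xf := by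
    intro c
    refine ⟨max c (t+1), le_max_left _ _, ?_⟩
    rw [hXf]
    rintro ⟨i, hi⟩
    have h2 : t - γ i = max c (t+1) := congrArg Prod.snd hi
    have h3 := hγ i
    have h4 := le_max_right c (t+1)
    omega
  have hAtime : ∀ (t₁ : ℤ) (G : FTCG V), Candidate Gs G →
      AncAvoid G.E {(X i₀, tc)} (C, tc) (S, t₁) → tc ≤ t₁ :=
    fun t₁ G _ hp => st11_rtg_time_le G (fun _ _ h => h.1) hp
  have hlen2 : ∀ (r : V → V → Prop) (vs : List V), S ≠ C → vs.head? = some C →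
      vs.getLast? = some S → 2 ≤ vs.length := by
    intro r vs hSC hhd hlast
    match vs with
    | [] => simp at hhd
    | [x] =>
      exfalso; apply hSC
      simp at hhd hlast
      rw [← hhd, ← hlast]
    | x :: y :: l' => simp only [List.length_cons]; omega
  refine ⟨?_, ?_, ?_⟩
  · intro h1
    apply le_antisymm
    · obtain ⟨m, ⟨hm1, hm2⟩, hmin⟩ :=
        Int.exists_least_of_bdd (P := fun t₁ => tc ≤ t₁ ∧ (S, t₁) ∉ Xf)
          ⟨tc, fun _ h => h.1⟩ (hBne tc)
      have hub : toETime m ≤ sInf { s : ETime | ∃ t₁ : ℤ, s = toETime t₁ ∧ tc ≤ t₁ ∧ (S, t₁) ∉ Xf } :=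
        le_sInf (by rintro s ⟨t₁, rfl, ht1, ht2⟩; exact st11_toETime_le_iff.2 (hmin t₁ ⟨ht1, ht2⟩))
      refine le_trans (sInf_le ?_) hub
      refine ⟨m, rfl, hm2, ?_⟩
      by_cases hSC : S = C
      · subst hSC
        have hmtc : m = tc := le_antisymm (hmin tc ⟨le_refl _, hCtc_nXf⟩) hm1
        obtain ⟨G0, hG0⟩ := hGs
        exact ⟨G0, hG0, hmtc ▸ Relation.ReflTransGen.refl⟩
      · obtain ⟨vs, hch, hnd, hhd, hlast⟩ := st11_exists_nodup_chain _ h1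
        have hmemne : ∀ x ∈ vs, x ≠ X i₀ :=
          st11_chain_mem hch hhd (fun _ _ h => h.2.2) hCXi
        exact st11_core Gs (X i₀) tc m vs (List.IsChain.imp (fun _ _ h => h.1) hch) hnd
          (hlen2 Gs vs hSC hhd hlast) hhd hlast hCXi hm1
          (fun hmem => absurd rfl (hmemne _ hmem))
    · refine le_sInf ?_
      rintro s ⟨t₁, rfl, hnXf, G, hG, hpath⟩
      exact sInf_le ⟨t₁, rfl, hAtime t₁ G hG hpath, hnXf⟩
  · intro h1 h2
    apply le_antisymm
    · obtain ⟨m, ⟨hm1, hm2⟩, hmin⟩ :=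
        Int.exists_least_of_bdd (P := fun t₁ => tc + 1 ≤ t₁ ∧ (S, t₁) ∉ Xf)
          ⟨tc + 1, fun _ h => h.1⟩ (hBne (tc + 1))
      have hub : toETime m ≤ sInf { s : ETime | ∃ t₁ : ℤ, s = toETime t₁ ∧ tc + 1 ≤ t₁ ∧ (S, t₁) ∉ Xf } :=
        le_sInf (by rintro s ⟨t₁, rfl, ht1, ht2⟩; exact st11_toETime_le_iff.2 (hmin t₁ ⟨ht1, ht2⟩))
      refine le_trans (sInf_le ?_) hub
      refine ⟨m, rfl, hm2, ?_⟩
      have hSC : S ≠ C := by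
        intro h
        subst h
        exact h1 Relation.ReflTransGen.refl
      obtain ⟨vs, hch, hnd, hhd, hlast⟩ := st11_exists_nodup_chain Gs h2
      exact st11_core Gs (X i₀) tc m vs hch hnd (hlen2 Gs vs hSC hhd hlast) hhd hlast hCXi
        (by omega) (fun _ => hm1)
    · refine le_sInf ?_
      rintro s ⟨t₁, rfl, hnXf, G, hG, hpath⟩
      have ht : tc ≤ t₁ := hAtime t₁ G hG hpath
      have ht' : t₁ ≠ tc := by
        intro h
        subst h
        exact h1 (st11_proj_avoid hG (X i₀) t₁ hpath (le_refl _))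
      exact sInf_le ⟨t₁, rfl, by omega, hnXf⟩
  · intro h1
    have hempty : { s : ETime | ∃ t₁ : ℤ, s = toETime t₁ ∧ (S, t₁) ∉ Xf ∧
        ∃ G : FTCG V, Candidate Gs G ∧
          AncAvoid G.E {(X i₀, tc)} (C, tc) (S, t₁) } = ∅ := by
      apply Set.eq_empty_iff_forall_notMem.2
      rintro s ⟨t₁, rfl, hnXf, G, hG, hpath⟩
      exact h1 (st11_rtg_proj hG (fun _ _ h => h.1) hpath)
    rw [hempty, sInf_empty]
end
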